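/- arXiv:1502.06484 — 5 statements merged into one kernel-verified Lean document; each statement's English description precedes it below -/
import Mathlib

section
/- Let $n \ge 1$ and $0 < \lambda < n$. There is a constant $C > 0$, depending only on $n$ and $\lambda$, such that for every radial, decreasing function $f$ on $\mathbb{R}^n$, i.e. $f(x) = \varphi(|x|)$ with $\varphi$ nonnegative and nonincreasing on $(0,\infty)$, one has $$\|f\|_{\mathcal{M}_{1,\lambda}} \;\le\; C \, \sup_{x>0} x^{\lambda - n} \int_0^x \varphi(\rho)\, \rho^{n-1}\, d\rho.$$ -/
open MeasureTheory Set
open scoped ENNReal NNReal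

lemma lemA (m : ℕ) (φ : ℝ → ℝ) (hpos : ∀ ρ ∈ Ioi (0:ℝ), 0 ≤ φ ρ)
    (hmono : AntitoneOn φ (Ioi (0:ℝ))) {t : ℝ} (ht : 0 < t) :
    ENNReal.ofReal (φ t) * ENNReal.ofReal (t ^ (m+1)) ≤
      2 ^ (m+1) * ∫⁻ ρ in Ioo (t/2) t, ENNReal.ofReal (φ ρ * ρ ^ m) := by
  have ht2 : 0 < t/2 := by linarith
  have hstep : ENNReal.ofReal (φ t * (t/2) ^ m) * ENNReal.ofReal (t/2)
      ≤ ∫⁻ ρ in Ioo (t/2) t, ENNReal.ofReal (φ ρ * ρ ^ m) := by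
    have : ∫⁻ _ρ in Ioo (t/2) t, ENNReal.ofReal (φ t * (t/2) ^ m)
        = ENNReal.ofReal (φ t * (t/2) ^ m) * ENNReal.ofReal (t/2) := by
      rw [MeasureTheory.setLIntegral_const, Real.volume_Ioo]
      congr 1
      ring_nf
    rw [← this]
    refine setLIntegral_mono' measurableSet_Ioo (fun ρ hρ => ?_)
    have hρ1 : t/2 < ρ := hρ.1
    have hρ2 : ρ < t := hρ.2
    refine ENNReal.ofReal_le_ofReal ?_
    have h1 : φ t ≤ φ ρ := hmono (by exact lt_trans ht2 hρ1) (mem_Ioi.mpr ht) hρ2.le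
    have h2 : (t/2) ^ m ≤ ρ ^ m := pow_le_pow_left₀ ht2.le hρ1.le m
    have h3 : 0 ≤ φ ρ := hpos ρ (lt_trans ht2 hρ1)
    nlinarith [pow_nonneg ht2.le m]
  have h2n : (2:ℝ≥0∞) ^ (m+1) = ENNReal.ofReal (2 ^ (m+1)) := by
    simp [ENNReal.ofReal_pow]
  calc ENNReal.ofReal (φ t) * ENNReal.ofReal (t ^ (m+1))
      = 2 ^ (m+1) * (ENNReal.ofReal (φ t * (t/2) ^ m) * ENNReal.ofReal (t/2)) := by
        rw [← ENNReal.ofReal_mul (hpos t ht),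
          ← ENNReal.ofReal_mul (mul_nonneg (hpos t ht) (by positivity)), h2n,
          ← ENNReal.ofReal_mul (by positivity)]
        congr 1
        rw [div_pow]
        field_simp
        ring
    _ ≤ _ := mul_le_mul_right hstep _

lemma ballInt (m : ℕ) (f : EuclideanSpace ℝ (Fin (m+1)) → ℝ) (φ : ℝ → ℝ)
    (hpos : ∀ ρ ∈ Ioi (0:ℝ), 0 ≤ φ ρ) (hmono : AntitoneOn φ (Ioi (0:ℝ)))
    (hf : ∀ x, f x = φ ‖x‖) {R : ℝ} (hR : 0 < R) :
    ∫⁻ y in Metric.ball (0 : EuclideanSpace ℝ (Fin (m+1))) R, (‖f y‖₊ : ℝ≥0∞) ≤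
      4 ^ (m+1) * volume (Metric.ball (0 : EuclideanSpace ℝ (Fin (m+1))) 1) *
        ∫⁻ ρ in Ioo (0:ℝ) R, ENNReal.ofReal (φ ρ * ρ ^ m) := by
  classical
  set V := volume (Metric.ball (0 : EuclideanSpace ℝ (Fin (m+1))) 1) with hV
  set t : ℕ → ℝ := fun k => R / 2 ^ (k+1) with htdef
  have htpos : ∀ k, 0 < t k := fun k => by positivity
  have htlt : ∀ k, t k < R := by
    intro k
    have h1 : (1:ℝ) ≤ 2 ^ k := one_le_pow₀ one_le_two
    show R / 2 ^ (k+1) < R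
    rw [div_lt_iff₀ (by positivity), pow_succ]
    nlinarith
  have ht2 : ∀ k, (2:ℝ) * t k = R / 2 ^ k := fun k => by
    show (2:ℝ) * (R / 2 ^ (k+1)) = R / 2 ^ k
    rw [pow_succ]
    field_simp
  have htsucc : ∀ k, t k / 2 = t (k+1) := fun k => by
    show R / 2 ^ (k+1) / 2 = R / 2 ^ (k+1+1)
    rw [pow_succ (n := k+1), div_div]
  set A : ℕ → Set (EuclideanSpace ℝ (Fin (m+1))) :=
    fun k => {y : EuclideanSpace ℝ (Fin (m+1)) | t k ≤ ‖y‖} ∩ Metric.ball 0 (2 * t k) with hA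
  have hmeas : ∀ k, MeasurableSet (A k) := by
    intro k
    refine MeasurableSet.inter ?_ measurableSet_ball
    have : {y : EuclideanSpace ℝ (Fin (m+1)) | t k ≤ ‖y‖}
        = (Metric.ball (0 : EuclideanSpace ℝ (Fin (m+1))) (t k))ᶜ := by
      ext y; simp [mem_ball_zero_iff, not_lt]
    rw [this]
    exact measurableSet_ball.compl
  have hcover : Metric.ball (0 : EuclideanSpace ℝ (Fin (m+1))) R ⊆ {0} ∪ ⋃ k, A k := by
    intro y hy
    rcases eq_or_ne y 0 with rfl | hy0
    · exact Or.inl rfl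
    right
    have hy0' : 0 < ‖y‖ := norm_pos_iff.mpr hy0
    have hyR : ‖y‖ < R := by simpa [mem_ball_zero_iff] using hy
    have hex : ∃ k, t k ≤ ‖y‖ := by
      obtain ⟨k, hk⟩ := pow_unbounded_of_one_lt (R / ‖y‖) (one_lt_two (α := ℝ))
      refine ⟨k, ?_⟩
      show R / 2 ^ (k+1) ≤ ‖y‖
      rw [div_le_iff₀ (by positivity)]
      rw [div_lt_iff₀ hy0'] at hk
      have h2 : (2:ℝ) ^ (k+1) = 2 * 2 ^ k := by ring
      nlinarith [pow_pos (zero_lt_two (α := ℝ)) k]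
    set k0 := Nat.find hex with hk0
    refine mem_iUnion.mpr ⟨k0, Nat.find_spec hex, ?_⟩
    rw [mem_ball_zero_iff]
    rcases Nat.eq_zero_or_pos k0 with h0 | hpos'
    · have : (2:ℝ) * t k0 = R := by rw [h0, ht2]; norm_num
      rw [this]; exact hyR
    · obtain ⟨j, hj⟩ := Nat.exists_eq_add_of_lt hpos'
      have hlt : ¬ t j ≤ ‖y‖ := Nat.find_min hex (by omega)
      push_neg at hlt
      have : (2:ℝ) * t k0 = t j := by
        rw [ht2]
        show R / 2 ^ k0 = R / 2 ^ (j+1)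
        rw [hj]
        norm_num
      rw [this]; exact hlt
  have hdisj : Pairwise (Function.onFun Disjoint A) := by
    have key : ∀ j k, j < k → Disjoint (A j) (A k) := by
      intro j k hjk
      rw [Set.disjoint_left]
      rintro y ⟨hy1, _⟩ ⟨_, hy4⟩
      rw [mem_ball_zero_iff] at hy4
      have h1 : (2:ℝ) * t k ≤ t j := by
        rw [ht2]
        show R / 2 ^ k ≤ R / 2 ^ (j+1)
        apply div_le_div_of_nonneg_left hR.le (by positivity)
        exact pow_le_pow_right₀ one_le_two (by omega)
      have h2 : t j ≤ ‖y‖ := hy1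
      linarith
    intro j k hjk
    rcases lt_or_gt_of_ne hjk with h | h
    · exact key j k h
    · exact (key k j h).symm
  have hann : ∀ k, ∫⁻ y in A k, (‖f y‖₊ : ℝ≥0∞) ≤
      4 ^ (m+1) * V * ∫⁻ ρ in Ioo (t (k+1)) (t k), ENNReal.ofReal (φ ρ * ρ ^ m) := by
    intro k
    have step1 : ∫⁻ y in A k, (‖f y‖₊ : ℝ≥0∞) ≤
        ENNReal.ofReal (φ (t k)) * volume (A k) := by
      rw [← setLIntegral_const (A k) (ENNReal.ofReal (φ (t k)))]
      refine setLIntegral_mono' (hmeas k) (fun y hy => ?_)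
      have h1 : t k ≤ ‖y‖ := hy.1
      rw [hf, ← enorm_eq_nnnorm, Real.enorm_eq_ofReal (hpos _ (lt_of_lt_of_le (htpos k) h1))]
      exact ENNReal.ofReal_le_ofReal (hmono (htpos k) (lt_of_lt_of_le (htpos k) h1) h1)
    have step2 : volume (A k) ≤ ENNReal.ofReal ((2 * t k) ^ (m+1)) * V := by
      calc volume (A k) ≤ volume (Metric.ball (0 : EuclideanSpace ℝ (Fin (m+1))) (2 * t k)) :=
            measure_mono inter_subset_right
        _ = ENNReal.ofReal ((2 * t k) ^ (m+1)) * V := by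
            rw [hV, Measure.addHaar_ball volume 0 (by positivity : (0:ℝ) ≤ 2 * t k)]
            congr
            exact finrank_euclideanSpace_fin
    have step3 := lemA m φ hpos hmono (htpos k)
    calc ∫⁻ y in A k, (‖f y‖₊ : ℝ≥0∞)
        ≤ ENNReal.ofReal (φ (t k)) * (ENNReal.ofReal ((2 * t k) ^ (m+1)) * V) :=
          step1.trans (mul_le_mul_right step2 _)
      _ = 2 ^ (m+1) * V * (ENNReal.ofReal (φ (t k)) * ENNReal.ofReal ((t k) ^ (m+1))) := by
          rw [mul_pow, ENNReal.ofReal_mul (by positivity)]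
          rw [show ENNReal.ofReal ((2:ℝ) ^ (m+1)) = (2:ℝ≥0∞) ^ (m+1) by
            simp [ENNReal.ofReal_pow]]
          ring
      _ ≤ 2 ^ (m+1) * V * (2 ^ (m+1) * ∫⁻ ρ in Ioo (t k / 2) (t k),
            ENNReal.ofReal (φ ρ * ρ ^ m)) := mul_le_mul_right step3 _
      _ = 4 ^ (m+1) * V * ∫⁻ ρ in Ioo (t (k+1)) (t k), ENNReal.ofReal (φ ρ * ρ ^ m) := by
          rw [htsucc]
          rw [show (4:ℝ≥0∞) ^ (m+1) = 2 ^ (m+1) * 2 ^ (m+1) by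
            rw [← mul_pow]; norm_num]
          ring
  have hsum : (∑' k, ∫⁻ ρ in Ioo (t (k+1)) (t k), ENNReal.ofReal (φ ρ * ρ ^ m)) ≤
      ∫⁻ ρ in Ioo (0:ℝ) R, ENNReal.ofReal (φ ρ * ρ ^ m) := by
    have hmono' : StrictAnti t := by
      intro a b hab
      apply div_lt_div_of_pos_left hR (by positivity)
      exact pow_lt_pow_right₀ one_lt_two (by omega)
    have hd : Pairwise (Function.onFun Disjoint fun k => Ioo (t (k+1)) (t k)) := by
      have key : ∀ j k, j < k → Disjoint (Ioo (t (j+1)) (t j)) (Ioo (t (k+1)) (t k)) := by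
        intro j k hjk
        rw [Set.disjoint_left]
        rintro ρ ⟨h1, _⟩ ⟨_, h4⟩
        have h5 : t k ≤ t (j+1) := by
          rcases eq_or_lt_of_le (Nat.succ_le_of_lt hjk) with h | h
          · rw [← h]
          · exact (hmono' h).le
        linarith
      intro j k hjk
      rcases lt_or_gt_of_ne hjk with h | h
      · exact key j k h
      · exact (key k j h).symm
    have hsub : (⋃ k, Ioo (t (k+1)) (t k)) ⊆ Ioo (0:ℝ) R := by
      refine iUnion_subset fun k => ?_
      exact Ioo_subset_Ioo (htpos (k+1)).le (htlt k).le
    calc (∑' k, ∫⁻ ρ in Ioo (t (k+1)) (t k), ENNReal.ofReal (φ ρ * ρ ^ m))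
        = ∫⁻ ρ in ⋃ k, Ioo (t (k+1)) (t k), ENNReal.ofReal (φ ρ * ρ ^ m) := by
          rw [Measure.restrict_iUnion hd (fun k => measurableSet_Ioo),
            lintegral_sum_measure]
      _ ≤ _ := lintegral_mono' (Measure.restrict_mono hsub le_rfl) le_rfl
  calc ∫⁻ y in Metric.ball (0 : EuclideanSpace ℝ (Fin (m+1))) R, (‖f y‖₊ : ℝ≥0∞)
      ≤ ∫⁻ y in {(0 : EuclideanSpace ℝ (Fin (m+1)))} ∪ ⋃ k, A k, (‖f y‖₊ : ℝ≥0∞) :=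
        lintegral_mono' (Measure.restrict_mono hcover le_rfl) le_rfl
    _ ≤ (∫⁻ y in {(0 : EuclideanSpace ℝ (Fin (m+1)))}, (‖f y‖₊ : ℝ≥0∞))
          + ∫⁻ y in ⋃ k, A k, (‖f y‖₊ : ℝ≥0∞) := lintegral_union_le _ _ _
    _ = ∫⁻ y in ⋃ k, A k, (‖f y‖₊ : ℝ≥0∞) := by
        rw [setLIntegral_measure_zero _ _
          (by simp : volume ({0} : Set (EuclideanSpace ℝ (Fin (m+1)))) = 0), zero_add]
    _ ≤ ∑' k, ∫⁻ y in A k, (‖f y‖₊ : ℝ≥0∞) := lintegral_iUnion_le _ _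
    _ ≤ ∑' k, 4 ^ (m+1) * V * ∫⁻ ρ in Ioo (t (k+1)) (t k), ENNReal.ofReal (φ ρ * ρ ^ m) :=
        ENNReal.tsum_le_tsum hann
    _ = 4 ^ (m+1) * V * ∑' k, ∫⁻ ρ in Ioo (t (k+1)) (t k), ENNReal.ofReal (φ ρ * ρ ^ m) :=
        ENNReal.tsum_mul_left
    _ ≤ _ := mul_le_mul_right hsum _

/-- The Morrey "norm" `‖f‖_{M_{1,λ}} = sup_{x ∈ ℝⁿ, r > 0} r^{λ-n} ∫_{B(x,r)} |f|`,
valued in `ℝ≥0∞`. -/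
noncomputable def morreyNorm (n : ℕ) (lam : ℝ) (f : EuclideanSpace ℝ (Fin n) → ℝ) : ℝ≥0∞ :=
  ⨆ (x : EuclideanSpace ℝ (Fin n)) (r : ℝ) (_ : 0 < r),
    ENNReal.ofReal (r ^ (lam - (n:ℝ))) * ∫⁻ y in Metric.ball x r, ‖f y‖₊

lemma ofReal_rpow_mul_ofReal_rpow_neg {a : ℝ} (ha : 0 < a) (e : ℝ) :
    ENNReal.ofReal (a ^ e) * ENNReal.ofReal (a ^ (-e)) = 1 := by
  rw [← ENNReal.ofReal_mul (Real.rpow_nonneg ha.le e), ← Real.rpow_add ha,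
    add_neg_cancel, Real.rpow_zero, ENNReal.ofReal_one]

/-- For `n ≥ 1`, `0 < λ < n`, there is `C > 0` (depending only on `n, λ`) such that
for every radial decreasing `f(x) = φ(|x|)` with `φ ≥ 0` nonincreasing on `(0,∞)`,
`‖f‖_{M_{1,λ}} ≤ C · sup_{x>0} x^{λ-n} ∫_0^x φ(ρ) ρ^{n-1} dρ`. -/
theorem statement2 (n : ℕ) (hn : 1 ≤ n) (lam : ℝ) (hlam0 : 0 < lam) (hlamn : lam < n) :
    ∃ C : ℝ, 0 < C ∧ ∀ (f : EuclideanSpace ℝ (Fin n) → ℝ) (φ : ℝ → ℝ),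
      (∀ ρ ∈ Set.Ioi (0:ℝ), 0 ≤ φ ρ) → AntitoneOn φ (Set.Ioi (0:ℝ)) →
      (∀ x, f x = φ ‖x‖) →
      morreyNorm n lam f
        ≤ ENNReal.ofReal C *
          ⨆ (x : ℝ) (_ : 0 < x), ENNReal.ofReal (x ^ (lam - (n:ℝ))) *
            ∫⁻ ρ in Set.Ioo (0:ℝ) x, ENNReal.ofReal (φ ρ * ρ ^ (n - 1)) := by
  obtain ⟨m, rfl⟩ : ∃ m, n = m + 1 := ⟨n - 1, by omega⟩
  set V := volume (Metric.ball (0 : EuclideanSpace ℝ (Fin (m+1))) 1) with hVdef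
  have hVfin : V ≠ ⊤ := measure_ball_lt_top.ne
  have hVre : ENNReal.ofReal V.toReal = V := ENNReal.ofReal_toReal hVfin
  set C : ℝ := (4 ^ (m+1) * 3 ^ (((m+1 : ℕ) : ℝ) - lam) + 2 ^ (m+1)) * V.toReal + 1 with hCdef
  have hVnn : 0 ≤ V.toReal := ENNReal.toReal_nonneg
  have hCpos : 0 < C := by positivity
  refine ⟨C, hCpos, ?_⟩
  intro f φ hpos hmono hf
  simp only [Nat.add_sub_cancel]
  set S := ⨆ (x : ℝ) (_ : 0 < x), ENNReal.ofReal (x ^ (lam - ((m+1 : ℕ) : ℝ))) *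
      ∫⁻ ρ in Set.Ioo (0:ℝ) x, ENNReal.ofReal (φ ρ * ρ ^ m) with hSdef
  -- integral bound from the sup
  have hS_bound : ∀ t : ℝ, 0 < t →
      (∫⁻ ρ in Ioo (0:ℝ) t, ENNReal.ofReal (φ ρ * ρ ^ m)) ≤
        ENNReal.ofReal (t ^ (((m+1 : ℕ) : ℝ) - lam)) * S := by
    intro t ht
    have h1 : ENNReal.ofReal (t ^ (lam - ((m+1 : ℕ) : ℝ))) *
        ∫⁻ ρ in Ioo (0:ℝ) t, ENNReal.ofReal (φ ρ * ρ ^ m) ≤ S := by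
      rw [hSdef]
      exact le_iSup_of_le t (le_iSup_of_le ht le_rfl)
    calc (∫⁻ ρ in Ioo (0:ℝ) t, ENNReal.ofReal (φ ρ * ρ ^ m))
        = (ENNReal.ofReal (t ^ (((m+1 : ℕ) : ℝ) - lam)) *
            ENNReal.ofReal (t ^ (lam - ((m+1 : ℕ) : ℝ)))) *
            ∫⁻ ρ in Ioo (0:ℝ) t, ENNReal.ofReal (φ ρ * ρ ^ m) := by
          rw [show lam - ((m+1 : ℕ) : ℝ) = -(((m+1 : ℕ) : ℝ) - lam) by ring,
            ofReal_rpow_mul_ofReal_rpow_neg ht, one_mul]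
      _ = ENNReal.ofReal (t ^ (((m+1 : ℕ) : ℝ) - lam)) *
            (ENNReal.ofReal (t ^ (lam - ((m+1 : ℕ) : ℝ))) *
            ∫⁻ ρ in Ioo (0:ℝ) t, ENNReal.ofReal (φ ρ * ρ ^ m)) := by ring
      _ ≤ _ := mul_le_mul_right h1 _
  -- pointwise bound for φ
  have hphi : ∀ t : ℝ, 0 < t →
      ENNReal.ofReal (φ t) * ENNReal.ofReal (t ^ (m+1)) ≤
        2 ^ (m+1) * (ENNReal.ofReal (t ^ (((m+1 : ℕ) : ℝ) - lam)) * S) := by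
    intro t ht
    calc ENNReal.ofReal (φ t) * ENNReal.ofReal (t ^ (m+1))
        ≤ 2 ^ (m+1) * ∫⁻ ρ in Ioo (t/2) t, ENNReal.ofReal (φ ρ * ρ ^ m) :=
          lemA m φ hpos hmono ht
      _ ≤ 2 ^ (m+1) * ∫⁻ ρ in Ioo (0:ℝ) t, ENNReal.ofReal (φ ρ * ρ ^ m) := by
          refine mul_le_mul_right (lintegral_mono' (Measure.restrict_mono ?_ le_rfl) le_rfl) _
          exact Ioo_subset_Ioo (by linarith) le_rfl
      _ ≤ _ := mul_le_mul_right (hS_bound t ht) _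
  rw [morreyNorm]
  refine iSup_le fun x => iSup_le fun r => iSup_le fun hr => ?_
  by_cases h2r : ‖x‖ ≤ 2 * r
  · -- case 1: near the origin
    have hball : Metric.ball x r ⊆ Metric.ball (0 : EuclideanSpace ℝ (Fin (m+1))) (3*r) := by
      intro y hy
      rw [Metric.mem_ball, dist_eq_norm] at hy
      rw [mem_ball_zero_iff]
      calc ‖y‖ = ‖(y - x) + x‖ := by rw [sub_add_cancel]
        _ ≤ ‖y - x‖ + ‖x‖ := norm_add_le _ _
        _ < r + 2 * r := by linarith [hy, h2r]
        _ = 3 * r := by ring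
    have hC1 : 4 ^ (m+1) * V * ENNReal.ofReal ((3:ℝ) ^ (((m+1 : ℕ) : ℝ) - lam))
        ≤ ENNReal.ofReal C := by
      rw [show (4:ℝ≥0∞) ^ (m+1) = ENNReal.ofReal ((4:ℝ) ^ (m+1)) by simp [ENNReal.ofReal_pow],
        ← hVre, ← ENNReal.ofReal_mul (by positivity), mul_comm _ (ENNReal.ofReal _),
        ← ENNReal.ofReal_mul (by positivity)]
      refine ENNReal.ofReal_le_ofReal ?_
      rw [hCdef]
      have h3 : (0:ℝ) ≤ 3 ^ (((m+1 : ℕ) : ℝ) - lam) := by positivity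
      nlinarith [pow_pos (zero_lt_two (α := ℝ)) (m+1), hVnn]
    calc ENNReal.ofReal (r ^ (lam - ((m+1 : ℕ) : ℝ))) * ∫⁻ y in Metric.ball x r, (‖f y‖₊ : ℝ≥0∞)
        ≤ ENNReal.ofReal (r ^ (lam - ((m+1 : ℕ) : ℝ))) *
            ∫⁻ y in Metric.ball (0 : EuclideanSpace ℝ (Fin (m+1))) (3*r), (‖f y‖₊ : ℝ≥0∞) :=
          mul_le_mul_right (lintegral_mono' (Measure.restrict_mono hball le_rfl) le_rfl) _
      _ ≤ ENNReal.ofReal (r ^ (lam - ((m+1 : ℕ) : ℝ))) *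
            (4 ^ (m+1) * V * ∫⁻ ρ in Ioo (0:ℝ) (3*r), ENNReal.ofReal (φ ρ * ρ ^ m)) :=
          mul_le_mul_right (ballInt m f φ hpos hmono hf (by linarith)) _
      _ ≤ ENNReal.ofReal (r ^ (lam - ((m+1 : ℕ) : ℝ))) *
            (4 ^ (m+1) * V * (ENNReal.ofReal ((3*r) ^ (((m+1 : ℕ) : ℝ) - lam)) * S)) :=
          mul_le_mul_right (mul_le_mul_right (hS_bound (3*r) (by linarith)) _) _
      _ = (4 ^ (m+1) * V * ENNReal.ofReal ((3:ℝ) ^ (((m+1 : ℕ) : ℝ) - lam))) * S *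
            (ENNReal.ofReal (r ^ (lam - ((m+1 : ℕ) : ℝ))) *
              ENNReal.ofReal (r ^ (((m+1 : ℕ) : ℝ) - lam))) := by
          rw [Real.mul_rpow (by norm_num) hr.le,
            ENNReal.ofReal_mul (by positivity)]
          ring
      _ = (4 ^ (m+1) * V * ENNReal.ofReal ((3:ℝ) ^ (((m+1 : ℕ) : ℝ) - lam))) * S := by
          rw [show (((m+1 : ℕ) : ℝ) - lam) = -(lam - ((m+1 : ℕ) : ℝ)) by ring,
            ofReal_rpow_mul_ofReal_rpow_neg hr, mul_one]
      _ ≤ ENNReal.ofReal C * S := mul_le_mul_left hC1 S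
  · -- case 2: far from the origin
    push_neg at h2r
    set t : ℝ := ‖x‖ - r with htdef
    have hrt : r < t := by rw [htdef]; linarith
    have ht0 : 0 < t := lt_trans hr hrt
    have hstep : ∫⁻ y in Metric.ball x r, (‖f y‖₊ : ℝ≥0∞) ≤
        ENNReal.ofReal (φ t) * volume (Metric.ball x r) := by
      rw [← setLIntegral_const (Metric.ball x r) (ENNReal.ofReal (φ t))]
      refine setLIntegral_mono' measurableSet_ball (fun y hy => ?_)
      rw [Metric.mem_ball, dist_eq_norm] at hy
      have hty : t ≤ ‖y‖ := by
        have := norm_sub_norm_le x y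
        rw [norm_sub_rev x y] at this
        rw [htdef]; linarith
      rw [hf, ← enorm_eq_nnnorm, Real.enorm_eq_ofReal (hpos _ (lt_of_lt_of_le ht0 hty))]
      exact ENNReal.ofReal_le_ofReal (hmono ht0 (lt_of_lt_of_le ht0 hty) hty)
    have hvol : volume (Metric.ball x r) = ENNReal.ofReal (r ^ (m+1)) * V := by
      rw [hVdef, Measure.addHaar_ball volume x hr.le]
      congr
      exact finrank_euclideanSpace_fin
    -- bound on φ t
    have hphit : ENNReal.ofReal (φ t) ≤
        2 ^ (m+1) * ENNReal.ofReal (t ^ (-lam)) * S := by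
      have h1 := hphi t ht0
      have h2 : 2 ^ (m+1) * (ENNReal.ofReal (t ^ (((m+1 : ℕ) : ℝ) - lam)) * S) =
          (2 ^ (m+1) * ENNReal.ofReal (t ^ (-lam)) * S) * ENNReal.ofReal (t ^ (m+1)) := by
        rw [show (((m+1 : ℕ) : ℝ) - lam) = -lam + ((m+1 : ℕ) : ℝ) by ring,
          Real.rpow_add ht0, ENNReal.ofReal_mul (by positivity),
          Real.rpow_natCast]
        ring
      rw [h2] at h1
      have hX0 : ENNReal.ofReal (t ^ (m+1)) ≠ 0 := by
        simp [ENNReal.ofReal_eq_zero, not_le]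
        positivity
      exact (ENNReal.mul_le_mul_iff_left hX0 ENNReal.ofReal_ne_top).mp h1
    have htr : ENNReal.ofReal (t ^ (-lam)) ≤ ENNReal.ofReal (r ^ (-lam)) := by
      refine ENNReal.ofReal_le_ofReal ?_
      rw [Real.rpow_neg ht0.le, Real.rpow_neg hr.le]
      refine inv_anti₀ (Real.rpow_pos_of_pos hr lam) ?_
      exact Real.rpow_le_rpow hr.le hrt.le hlam0.le
    have hC2 : 2 ^ (m+1) * V ≤ ENNReal.ofReal C := by
      rw [show (2:ℝ≥0∞) ^ (m+1) = ENNReal.ofReal ((2:ℝ) ^ (m+1)) by simp [ENNReal.ofReal_pow],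
        ← hVre, ← ENNReal.ofReal_mul (by positivity)]
      refine ENNReal.ofReal_le_ofReal ?_
      rw [hCdef]
      have h3 : (0:ℝ) ≤ 3 ^ (((m+1 : ℕ) : ℝ) - lam) := by positivity
      nlinarith [mul_nonneg (mul_nonneg (pow_nonneg (by norm_num : (0:ℝ) ≤ 4) (m+1)) h3) hVnn]
    calc ENNReal.ofReal (r ^ (lam - ((m+1 : ℕ) : ℝ))) * ∫⁻ y in Metric.ball x r, (‖f y‖₊ : ℝ≥0∞)
        ≤ ENNReal.ofReal (r ^ (lam - ((m+1 : ℕ) : ℝ))) *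
            (ENNReal.ofReal (φ t) * (ENNReal.ofReal (r ^ (m+1)) * V)) := by
          rw [← hvol]
          exact mul_le_mul_right hstep _
      _ ≤ ENNReal.ofReal (r ^ (lam - ((m+1 : ℕ) : ℝ))) *
            ((2 ^ (m+1) * ENNReal.ofReal (r ^ (-lam)) * S) * (ENNReal.ofReal (r ^ (m+1)) * V)) := by
          refine mul_le_mul_right (mul_le_mul_left ?_ _) _
          exact hphit.trans (mul_le_mul_left (mul_le_mul_right htr _) _)
      _ = (2 ^ (m+1) * V) * S *
            (ENNReal.ofReal (r ^ (lam - ((m+1 : ℕ) : ℝ)) * r ^ (((m+1 : ℕ) : ℝ)) * r ^ (-lam))) := by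
          rw [ENNReal.ofReal_mul (by positivity), ENNReal.ofReal_mul (by positivity),
            Real.rpow_natCast]
          ring
      _ = (2 ^ (m+1) * V) * S := by
          rw [← Real.rpow_add hr, ← Real.rpow_add hr,
            show lam - ((m+1 : ℕ) : ℝ) + ((m+1 : ℕ) : ℝ) + (-lam) = 0 by ring,
            Real.rpow_zero, ENNReal.ofReal_one, mul_one]
      _ ≤ ENNReal.ofReal C * S := mul_le_mul_left hC2 S
end

section
/- Let $f : \mathbb{R} \to \mathbb{R}$ be defined by $f(x) = \sum_{k=0}^{\infty} \chi_{[k^2, k^2+1]}(x)$. Then the Morrey norm $\|f\|_{\mathcal{M}_{1,1/2}(\mathbb{R})} = \sup_{I} |I|^{-1/2} \int_I f$, where the supremum is taken over all bounded open intervals $I \subset \mathbb{R}$, is finite; in fact there is an absolute constant $C$ with $\|f\|_{\mathcal{M}_{1,1/2}(\mathbb{R})} \le C$. -/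
open MeasureTheory Set
open scoped ENNReal NNReal

/-- The one-dimensional Morrey "norm"
`‖f‖_{M_{1,λ}(ℝ)} = sup_I |I|^{λ-1} ∫_I |f|`, supremum over bounded open intervals. -/
noncomputable def morreyNorm1 (lam : ℝ) (f : ℝ → ℝ) : ℝ≥0∞ :=
  ⨆ (a : ℝ) (b : ℝ) (_ : a < b),
    ENNReal.ofReal ((b - a) ^ (lam - 1)) * ∫⁻ y in Set.Ioo a b, ‖f y‖₊

/-- The k-th interval `[k², k²+1]`. -/
private def Jset (k : ℕ) : Set ℝ := Set.Icc ((k:ℝ)^2) ((k:ℝ)^2 + 1)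

private lemma vol_J_inter {i j : ℕ} (hij : i < j) : volume (Jset i ∩ Jset j) = 0 := by
  have hij' : (i:ℝ) + 1 ≤ (j:ℝ) := by exact_mod_cast hij
  have hsub : Jset i ∩ Jset j ⊆ Set.Icc ((j:ℝ)^2) ((i:ℝ)^2 + 1) := by
    rintro x ⟨⟨_, hx2⟩, ⟨hx3, _⟩⟩; exact ⟨hx3, hx2⟩
  refine measure_mono_null hsub ?_
  rw [Real.volume_Icc]
  rw [ENNReal.ofReal_eq_zero]
  nlinarith [Nat.cast_nonneg (α := ℝ) i]

private lemma term_zero {a b : ℝ} {k : ℕ} (h : ¬ (a - 1 < (k:ℝ)^2 ∧ (k:ℝ)^2 < b)) :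
    volume (Set.Ioo a b ∩ Jset k) = 0 := by
  have : Set.Ioo a b ∩ Jset k = ∅ := by
    rw [Set.eq_empty_iff_forall_notMem]
    rintro x ⟨⟨hax, hxb⟩, ⟨hkx, hxk⟩⟩
    push_neg at h
    rcases lt_or_ge (a - 1) ((k:ℝ)^2) with h1 | h1
    · exact absurd (h h1) (by linarith)
    · linarith
  simp [this]

/-- Bound 1: the sum is at most `b - a`. -/
private lemma bound1 (a b : ℝ) :
    ∑' k : ℕ, volume (Set.Ioo a b ∩ Jset k) ≤ ENNReal.ofReal (b - a) := by
  have hdisj : Pairwise (Function.onFun (AEDisjoint volume) fun k => Set.Ioo a b ∩ Jset k) := by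
    intro i j hij
    have key : ∀ i j : ℕ, i < j →
        volume ((Set.Ioo a b ∩ Jset i) ∩ (Set.Ioo a b ∩ Jset j)) = 0 := by
      intro i j hlt
      refine measure_mono_null ?_ (vol_J_inter hlt)
      rintro x ⟨⟨_, h1⟩, ⟨_, h2⟩⟩; exact ⟨h1, h2⟩
    rcases hij.lt_or_gt with h | h
    · exact key _ _ h
    · have := key _ _ h; rwa [Set.inter_comm] at this
  have hmeas : ∀ k : ℕ, NullMeasurableSet (Set.Ioo a b ∩ Jset k) volume :=
    fun k => (measurableSet_Ioo.inter measurableSet_Icc).nullMeasurableSet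
  rw [← measure_iUnion₀ hdisj hmeas]
  calc volume (⋃ k, Set.Ioo a b ∩ Jset k) ≤ volume (Set.Ioo a b) :=
        measure_mono (by simp [Set.iUnion_subset_iff])
    _ = ENNReal.ofReal (b - a) := Real.volume_Ioo

/-- Bound 2: the sum is at most `√(b-a) + 2`. -/
private lemma bound2 {a b : ℝ} (hab : a < b) :
    ∑' k : ℕ, volume (Set.Ioo a b ∩ Jset k) ≤ ENNReal.ofReal (Real.sqrt (b - a) + 2) := by
  classical
  set P : ℕ → Prop := fun k => a - 1 < (k:ℝ)^2 ∧ (k:ℝ)^2 < b with hP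
  set T : Finset ℕ := (Finset.range (⌈b⌉₊ + 1)).filter P with hT
  have hzero : ∀ k : ℕ, k ∉ T → volume (Set.Ioo a b ∩ Jset k) = 0 := by
    intro k hk
    apply term_zero
    intro hPk
    apply hk
    simp only [hT, Finset.mem_filter, Finset.mem_range]
    refine ⟨?_, hPk⟩
    by_contra hge
    push_neg at hge
    have h1 : (1:ℕ) ≤ k := le_trans (Nat.succ_le_succ (Nat.zero_le _)) hge
    have h1' : (1:ℝ) ≤ (k:ℝ) := by exact_mod_cast h1
    have hbk : b ≤ (k:ℝ) := le_trans (Nat.le_ceil b) (by exact_mod_cast Nat.le_of_succ_le hge)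
    nlinarith [hPk.2]
  rw [tsum_eq_sum hzero]
  have hcard : (T.card : ℝ) ≤ Real.sqrt (b - a) + 2 := by
    rcases T.eq_empty_or_nonempty with hT0 | hT0
    · simp [hT0]
      positivity
    · set k0 := T.min' hT0
      set k1 := T.max' hT0
      have hk0 : P k0 := (Finset.mem_filter.mp (T.min'_mem hT0)).2
      have hk1 : P k1 := (Finset.mem_filter.mp (T.max'_mem hT0)).2
      have hle : k0 ≤ k1 := T.min'_le _ (T.max'_mem hT0)
      have hsub : T ⊆ Finset.Icc k0 k1 := fun x hx =>
        Finset.mem_Icc.mpr ⟨T.min'_le _ hx, T.le_max' _ hx⟩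
      have hTcard : T.card ≤ k1 + 1 - k0 := by
        simpa [Nat.card_Icc] using Finset.card_le_card hsub
      have hcast : (T.card : ℝ) ≤ (k1:ℝ) - (k0:ℝ) + 1 := by
        have := Nat.cast_le (α := ℝ).mpr hTcard
        have h2 : ((k1 + 1 - k0 : ℕ) : ℝ) = (k1:ℝ) + 1 - k0 := by
          have : k0 ≤ k1 + 1 := le_trans hle (Nat.le_succ _)
          push_cast [this]; ring
        linarith [this, h2.le, h2.ge]
      have hd : (k1:ℝ) - (k0:ℝ) < Real.sqrt (b - a + 1) := by
        have hk01 : (k0:ℝ) ≤ k1 := by exact_mod_cast hle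
        rw [Real.lt_sqrt (by linarith)]
        nlinarith [hk0.1, hk1.2, Nat.cast_nonneg (α := ℝ) k0]
      have hs : Real.sqrt (b - a + 1) ≤ Real.sqrt (b - a) + 1 := by
        have h0 : (0:ℝ) ≤ b - a := le_of_lt (by linarith)
        have := Real.sq_sqrt h0
        have h2 : b - a + 1 ≤ (Real.sqrt (b - a) + 1)^2 := by
          nlinarith [Real.sqrt_nonneg (b - a)]
        calc Real.sqrt (b - a + 1) ≤ Real.sqrt ((Real.sqrt (b - a) + 1)^2) :=
              Real.sqrt_le_sqrt h2
          _ = Real.sqrt (b - a) + 1 := Real.sqrt_sq (by positivity)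
      linarith
  calc ∑ k ∈ T, volume (Set.Ioo a b ∩ Jset k)
      ≤ ∑ _k ∈ T, (1 : ℝ≥0∞) := by
        refine Finset.sum_le_sum fun k _ => ?_
        calc volume (Set.Ioo a b ∩ Jset k) ≤ volume (Jset k) :=
              measure_mono Set.inter_subset_right
          _ = 1 := by simp [Jset, Real.volume_Icc]
    _ = (T.card : ℝ≥0∞) := by simp
    _ ≤ ENNReal.ofReal (Real.sqrt (b - a) + 2) := by
        rw [← ENNReal.ofReal_natCast]
        exact ENNReal.ofReal_le_ofReal hcard

private lemma integral_eq (f : ℝ → ℝ)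
    (hf : ∀ x, f x = ∑' k : ℕ,
      Set.indicator (Set.Icc ((k:ℝ)^2) ((k:ℝ)^2 + 1)) (fun _ => (1:ℝ)) x)
    (a b : ℝ) :
    ∫⁻ y in Set.Ioo a b, ‖f y‖₊ = ∑' k : ℕ, volume (Set.Ioo a b ∩ Jset k) := by
  have hpt : ∀ y : ℝ, (‖f y‖₊ : ℝ≥0∞)
      = ∑' k : ℕ, (Jset k).indicator (fun _ => (1:ℝ≥0∞)) y := by
    intro y
    have hsummable : Summable (fun k : ℕ =>
        Set.indicator (Set.Icc ((k:ℝ)^2) ((k:ℝ)^2 + 1)) (fun _ => (1:ℝ)) y) := by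
      apply summable_of_ne_finset_zero (s := Finset.range (⌈y⌉₊ + 1))
      intro k hk
      simp only [Finset.mem_range] at hk
      push_neg at hk
      apply Set.indicator_of_notMem
      rintro ⟨h1, _⟩
      have h1k : (1:ℕ) ≤ k := le_trans (Nat.succ_le_succ (Nat.zero_le _)) hk
      have h1' : (1:ℝ) ≤ (k:ℝ) := by exact_mod_cast h1k
      have hyk : y + 1 ≤ (k:ℝ) := by
        have hc : ((⌈y⌉₊ + 1 : ℕ) : ℝ) ≤ k := by exact_mod_cast hk
        have := Nat.le_ceil y
        push_cast at hc
        linarith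
      nlinarith
    have hnonneg : ∀ k : ℕ,
        0 ≤ Set.indicator (Set.Icc ((k:ℝ)^2) ((k:ℝ)^2 + 1)) (fun _ => (1:ℝ)) y :=
      fun k => Set.indicator_nonneg (fun _ _ => zero_le_one) y
    rw [hf y, ← enorm_eq_nnnorm, Real.enorm_eq_ofReal (tsum_nonneg hnonneg),
      ENNReal.ofReal_tsum_of_nonneg hnonneg hsummable]
    congr 1
    funext k
    by_cases hy : y ∈ Set.Icc ((k:ℝ)^2) ((k:ℝ)^2 + 1)
    · rw [Set.indicator_of_mem hy, Set.indicator_of_mem (show y ∈ Jset k from hy),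
        ENNReal.ofReal_one]
    · rw [Set.indicator_of_notMem hy, Set.indicator_of_notMem (show y ∉ Jset k from hy),
        ENNReal.ofReal_zero]
  calc ∫⁻ y in Set.Ioo a b, (‖f y‖₊ : ℝ≥0∞)
      = ∫⁻ y in Set.Ioo a b, ∑' k : ℕ, (Jset k).indicator (fun _ => (1:ℝ≥0∞)) y := by
        exact lintegral_congr fun y => hpt y
    _ = ∑' k : ℕ, ∫⁻ y in Set.Ioo a b, (Jset k).indicator (fun _ => (1:ℝ≥0∞)) y :=
        lintegral_tsum fun k =>
          ((measurable_const.indicator (measurableSet_Icc)).aemeasurable)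
    _ = ∑' k : ℕ, volume (Set.Ioo a b ∩ Jset k) := by
        congr 1
        funext k
        have : ∫⁻ y in Set.Ioo a b, (Jset k).indicator (fun _ => (1:ℝ≥0∞)) y
            = (volume.restrict (Set.Ioo a b)) (Jset k) := by
          exact lintegral_indicator_one (μ := volume.restrict (Set.Ioo a b))
            (s := Jset k) measurableSet_Icc
        rw [this, Measure.restrict_apply (show MeasurableSet (Jset k) from measurableSet_Icc),
          Set.inter_comm]

/-- For `f = ∑_{k=0}^∞ χ_{[k², k²+1]}`, the Morrey norm
`‖f‖_{M_{1,1/2}(ℝ)}` is finite; indeed it is bounded by an absolute constant `C`. -/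
theorem statement7 (f : ℝ → ℝ)
    (hf : ∀ x, f x = ∑' k : ℕ,
      Set.indicator (Set.Icc ((k:ℝ)^2) ((k:ℝ)^2 + 1)) (fun _ => (1:ℝ)) x) :
    ∃ C : ℝ, 0 < C ∧ morreyNorm1 (1/2) f ≤ ENNReal.ofReal C := by
  refine ⟨3, by norm_num, ?_⟩
  rw [morreyNorm1]
  refine iSup_le fun a => iSup_le fun b => iSup_le fun hab => ?_
  set t := b - a with ht
  have ht0 : 0 < t := by simp [ht]; linarith
  rw [integral_eq f hf a b]
  rcases le_or_gt t 1 with hcase | hcase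
  · -- small interval: use bound1
    calc ENNReal.ofReal (t ^ (1/2 - 1 : ℝ)) * ∑' k : ℕ, volume (Set.Ioo a b ∩ Jset k)
        ≤ ENNReal.ofReal (t ^ (1/2 - 1 : ℝ)) * ENNReal.ofReal t :=
          mul_le_mul_right (bound1 a b) _
      _ = ENNReal.ofReal (t ^ (1/2 - 1 : ℝ) * t) := by
          rw [← ENNReal.ofReal_mul (Real.rpow_nonneg ht0.le _)]
      _ ≤ ENNReal.ofReal 3 := by
          apply ENNReal.ofReal_le_ofReal
          have heq : t ^ (1/2 - 1 : ℝ) * t = t ^ ((1:ℝ)/2) := by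
            conv_rhs => rw [show ((1:ℝ)/2) = (1/2 - 1) + 1 by ring,
              Real.rpow_add ht0, Real.rpow_one]
          rw [heq]
          have : t ^ ((1:ℝ)/2) ≤ 1 := Real.rpow_le_one ht0.le hcase (by norm_num)
          linarith
  · -- large interval: use bound2
    calc ENNReal.ofReal (t ^ (1/2 - 1 : ℝ)) * ∑' k : ℕ, volume (Set.Ioo a b ∩ Jset k)
        ≤ ENNReal.ofReal (t ^ (1/2 - 1 : ℝ)) * ENNReal.ofReal (Real.sqrt t + 2) :=
          mul_le_mul_right (bound2 hab) _
      _ = ENNReal.ofReal (t ^ (1/2 - 1 : ℝ) * (Real.sqrt t + 2)) := by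
          rw [← ENNReal.ofReal_mul (Real.rpow_nonneg ht0.le _)]
      _ ≤ ENNReal.ofReal 3 := by
          apply ENNReal.ofReal_le_ofReal
          have h1 : (1:ℝ) ≤ Real.sqrt t := by
            rw [show (1:ℝ) = Real.sqrt 1 by simp]
            exact Real.sqrt_le_sqrt hcase.le
          have hpos : (0:ℝ) < Real.sqrt t := by linarith
          rw [show (1/2 - 1 : ℝ) = -(1/2) by ring, Real.rpow_neg ht0.le,
            ← Real.sqrt_eq_rpow]
          rw [inv_mul_le_iff₀ hpos]
          nlinarith
end

section
/- Let $f : \mathbb{R} \to \mathbb{R}$ be defined by $f(x) = \sum_{k=0}^{\infty} \chi_{[k^2, k^2+1]}(x)$, and let $Mf$ denote its Hardy–Littlewood maximal function. Then for every integer $i \ge 1$, $$\int_{i^2}^{(i+1)^2} Mf(x)\, dx \;\ge\; \ln i.$$ -/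
open MeasureTheory Set
open scoped ENNReal NNReal

/-- The one-dimensional Hardy–Littlewood maximal function
`Mf(x) = sup_{I ∋ x} |I|⁻¹ ∫_I |f|`, supremum over bounded open intervals containing `x`. -/
noncomputable def maximalFn1 (f : ℝ → ℝ) (x : ℝ) : ℝ≥0∞ :=
  ⨆ (a : ℝ) (b : ℝ) (_ : a < b) (_ : x ∈ Set.Ioo a b),
    (ENNReal.ofReal (b - a))⁻¹ * ∫⁻ y in Set.Ioo a b, ‖f y‖₊

/-- For `f = ∑_{k=0}^∞ χ_{[k², k²+1]}` and every integer `i ≥ 1`,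
`∫_{i²}^{(i+1)²} Mf ≥ ln i`. -/
theorem statement9 (f : ℝ → ℝ)
    (hf : ∀ x, f x = ∑' k : ℕ,
      Set.indicator (Set.Icc ((k:ℝ)^2) ((k:ℝ)^2 + 1)) (fun _ => (1:ℝ)) x) :
    ∀ i : ℕ, 1 ≤ i →
      ENNReal.ofReal (Real.log i)
        ≤ ∫⁻ x in Set.Ioo ((i:ℝ)^2) (((i:ℝ) + 1)^2), maximalFn1 f x := by
  intro i hi
  set c : ℝ := (i:ℝ)^2 with hc
  have hi1 : (1:ℝ) ≤ (i:ℝ) := by exact_mod_cast hi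
  -- f is at least the i-th indicator
  have hfge : ∀ y, Set.indicator (Set.Icc c (c + 1)) (fun _ => (1:ℝ)) y ≤ f y := by
    intro y
    rw [hf y]
    have hsum : Summable (fun k : ℕ =>
        Set.indicator (Set.Icc ((k:ℝ)^2) ((k:ℝ)^2 + 1)) (fun _ => (1:ℝ)) y) := by
      apply summable_of_ne_finset_zero (s := Finset.range (Nat.ceil |y| + 1))
      intro k hk
      simp only [Finset.mem_range, not_lt] at hk
      have hk1 : 1 ≤ k := le_trans (Nat.one_le_iff_ne_zero.mpr (by omega)) le_rfl
      have : y < (k:ℝ)^2 := by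
        have h1 : |y| ≤ (Nat.ceil |y| : ℝ) := Nat.le_ceil _
        have h2 : (Nat.ceil |y| + 1 : ℝ) ≤ (k:ℝ) := by exact_mod_cast hk
        have hk2 : (1:ℝ) ≤ (k:ℝ) := by exact_mod_cast hk1
        have h3 : (k:ℝ) ≤ (k:ℝ)^2 := by nlinarith
        nlinarith [abs_nonneg y, le_abs_self y]
      apply Set.indicator_of_notMem
      simp only [Set.mem_Icc, not_and_or, not_le]
      left; linarith
    exact Summable.le_tsum hsum i (fun j _ => Set.indicator_nonneg (fun _ _ => zero_le_one) y)
  -- pointwise bound on the maximal function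
  have hpt : ∀ x ∈ Set.Ioo c (((i:ℝ) + 1)^2),
      ENNReal.ofReal ((x + 1 - c)⁻¹) ≤ maximalFn1 f x := by
    intro x hx
    have hxc : c < x := hx.1
    have hlt : c < x + 1 := by linarith
    have hmem : x ∈ Set.Ioo c (x + 1) := ⟨hxc, by linarith⟩
    have hterm : (ENNReal.ofReal ((x+1) - c))⁻¹ * ∫⁻ y in Set.Ioo c (x+1), ‖f y‖₊
        ≤ maximalFn1 f x := by
      refine le_trans ?_ (le_iSup _ c)
      refine le_trans ?_ (le_iSup _ (x+1))
      refine le_trans ?_ (le_iSup _ hlt)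
      exact le_iSup (fun _ : x ∈ Set.Ioo c (x+1) => _) hmem
    refine le_trans ?_ hterm
    have hint : (1:ℝ≥0∞) ≤ ∫⁻ y in Set.Ioo c (x+1), ‖f y‖₊ := by
      have hmono : ∀ y, Set.indicator (Set.Ioo c (c+1)) (fun _ => (1:ℝ≥0∞)) y
          ≤ (‖f y‖₊ : ℝ≥0∞) := by
        intro y
        by_cases hy : y ∈ Set.Ioo c (c+1)
        · rw [Set.indicator_of_mem hy]
          have h1 : (1:ℝ) ≤ f y := by
            have := hfge y
            rwa [Set.indicator_of_mem (Set.mem_Icc.mpr ⟨le_of_lt hy.1, le_of_lt hy.2⟩)] at this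
          have : (1:ℝ) ≤ ‖f y‖ := le_trans h1 (le_abs_self _)
          simpa [← ENNReal.coe_one, ENNReal.coe_le_coe, ← NNReal.coe_le_coe] using this
        · rw [Set.indicator_of_notMem hy]; exact zero_le
      calc (1:ℝ≥0∞) = ∫⁻ y in Set.Ioo c (x+1),
            Set.indicator (Set.Ioo c (c+1)) (fun _ => (1:ℝ≥0∞)) y := by
            rw [lintegral_indicator measurableSet_Ioo, Measure.restrict_restrict measurableSet_Ioo,
              setLIntegral_one]
            have hsub : Set.Ioo c (c+1) ∩ Set.Ioo c (x+1) = Set.Ioo c (c+1) := by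
              apply Set.inter_eq_self_of_subset_left
              exact Set.Ioo_subset_Ioo le_rfl (by linarith [hx.1])
            rw [hsub, Real.volume_Ioo]
            simp
        _ ≤ _ := lintegral_mono fun y => hmono y
    calc ENNReal.ofReal ((x + 1 - c)⁻¹)
        = (ENNReal.ofReal ((x+1) - c))⁻¹ * 1 := by
          rw [mul_one, ← ENNReal.ofReal_inv_of_pos (by linarith)]
      _ ≤ (ENNReal.ofReal ((x+1) - c))⁻¹ * ∫⁻ y in Set.Ioo c (x+1), ‖f y‖₊ :=
          mul_le_mul_right hint _
  -- integrate the lower bound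
  have hmeas : MeasurableSet (Set.Ioo c (((i:ℝ)+1)^2)) := measurableSet_Ioo
  refine le_trans ?_ (setLIntegral_mono' hmeas hpt)
  -- now a real computation
  have hcont : ContinuousOn (fun x : ℝ => (x + 1 - c)⁻¹) (Set.Icc c (((i:ℝ)+1)^2)) := by
    apply ContinuousOn.inv₀ (by fun_prop)
    intro x hx
    have := hx.1
    intro h; simp only [Set.mem_Icc] at hx; linarith [hx.1]
  have hintble : IntegrableOn (fun x : ℝ => (x + 1 - c)⁻¹) (Set.Ioo c (((i:ℝ)+1)^2)) := by
    exact (hcont.integrableOn_Icc).mono_set Set.Ioo_subset_Icc_self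
  have hnn : 0 ≤ᵐ[volume.restrict (Set.Ioo c (((i:ℝ)+1)^2))] fun x : ℝ => (x + 1 - c)⁻¹ := by
    filter_upwards [ae_restrict_mem hmeas] with x hx
    have : 0 < x + 1 - c := by linarith [hx.1]
    positivity
  rw [← ofReal_integral_eq_lintegral_ofReal hintble hnn]
  apply ENNReal.ofReal_le_ofReal
  -- compute the integral
  have hcsq : c < ((i:ℝ)+1)^2 := by nlinarith
  have hval : ∫ x in Set.Ioo c (((i:ℝ)+1)^2), (x + 1 - c)⁻¹
      = Real.log (((i:ℝ)+1)^2 + 1 - c) := by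
    rw [← integral_Ioc_eq_integral_Ioo, ← intervalIntegral.integral_of_le (le_of_lt hcsq)]
    have : ∀ x : ℝ, (x + 1 - c)⁻¹ = (fun y => y⁻¹) (x - (c - 1)) := by
      intro x; ring_nf
    rw [intervalIntegral.integral_congr (g := fun x => (fun y : ℝ => y⁻¹) (x - (c-1)))
      (fun x _ => this x)]
    rw [intervalIntegral.integral_comp_sub_right (fun y : ℝ => y⁻¹) (c-1)]
    have h1 : c - (c-1) = 1 := by ring
    have h2 : ((i:ℝ)+1)^2 - (c-1) = ((i:ℝ)+1)^2 + 1 - c := by ring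
    rw [h1, h2]
    have h0 : (0:ℝ) ∉ Set.uIcc 1 (((i:ℝ)+1)^2 + 1 - c) := by
      rw [Set.uIcc_of_le (by nlinarith)]
      simp only [Set.mem_Icc, not_and_or, not_le]
      left; norm_num
    have := integral_one_div h0
    simp only [one_div] at this
    rw [this, Real.log_div (by nlinarith) (by norm_num), Real.log_one, sub_zero]
  rw [hval]
  apply Real.log_le_log (by positivity)
  nlinarith
end

section
/- Let $f : \mathbb{R} \to \mathbb{R}$ be defined by $f(x) = \sum_{k=0}^{\infty} \chi_{[k^2, k^2+1]}(x)$, and let $Mf$ denote its Hardy–Littlewood maximal function. Then $\|Mf\|_{\mathcal{M}_{1,1/2}(\mathbb{R})} = \infty$; more precisely $\sup_{k \in \mathbb{N}} k^{-1} \int_0^{k^2} Mf(x)\, dx = \infty$. -/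
open MeasureTheory Set
open scoped ENNReal NNReal

/-- The one-dimensional Morrey "norm" of an `ℝ≥0∞`-valued function:
`sup_I |I|^{λ-1} ∫_I g`, supremum over bounded open intervals. -/
noncomputable def morreyNorm1E (lam : ℝ) (g : ℝ → ℝ≥0∞) : ℝ≥0∞ :=
  ⨆ (a : ℝ) (b : ℝ) (_ : a < b),
    ENNReal.ofReal ((b - a) ^ (lam - 1)) * ∫⁻ y in Set.Ioo a b, g y

private lemma st10_f_ge_one {f : ℝ → ℝ}
    (hf : ∀ x, f x = ∑' k : ℕ,
      Set.indicator (Set.Icc ((k:ℝ)^2) ((k:ℝ)^2 + 1)) (fun _ => (1:ℝ)) x)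
    (j : ℕ) {x : ℝ} (hx : x ∈ Set.Icc ((j:ℝ)^2) ((j:ℝ)^2 + 1)) : 1 ≤ f x := by
  rw [hf]
  have hsum : Summable (fun k : ℕ =>
      Set.indicator (Set.Icc ((k:ℝ)^2) ((k:ℝ)^2 + 1)) (fun _ => (1:ℝ)) x) := by
    apply summable_of_ne_finset_zero (s := Finset.range (⌈x⌉₊ + 1))
    intro k hk
    simp only [Finset.mem_range, not_lt] at hk
    apply Set.indicator_of_notMem
    intro hmem
    have h1 : (k:ℝ)^2 ≤ x := hmem.1
    have hk1 : 1 ≤ k := le_trans (by norm_num) hk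
    have hkk : (k:ℝ) ≤ (k:ℝ)^2 := by
      have : (1:ℝ) ≤ (k:ℝ) := by exact_mod_cast hk1
      nlinarith
    have hceil : x ≤ (⌈x⌉₊ : ℝ) := Nat.le_ceil x
    have : (⌈x⌉₊ + 1 : ℝ) ≤ (k:ℝ) := by exact_mod_cast hk
    linarith
  have hle := Summable.le_tsum hsum j (fun i _ =>
    Set.indicator_nonneg (fun _ _ => zero_le_one) x)
  rwa [Set.indicator_of_mem hx] at hle

private lemma st10_bump {f : ℝ → ℝ}
    (hf : ∀ x, f x = ∑' k : ℕ,
      Set.indicator (Set.Icc ((k:ℝ)^2) ((k:ℝ)^2 + 1)) (fun _ => (1:ℝ)) x)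
    (j : ℕ) :
    (1:ℝ≥0∞) ≤ ∫⁻ y in Set.Ioo ((j:ℝ)^2) ((j:ℝ)^2 + 1), (‖f y‖₊ : ℝ≥0∞) := by
  have h : ∀ y ∈ Set.Ioo ((j:ℝ)^2) ((j:ℝ)^2 + 1), (1:ℝ≥0∞) ≤ (‖f y‖₊ : ℝ≥0∞) := by
    intro y hy
    have h1 : 1 ≤ f y := st10_f_ge_one hf j ⟨hy.1.le, hy.2.le⟩
    have h2 : (1:ℝ) ≤ ‖f y‖ := by
      rw [Real.norm_eq_abs]; exact le_trans h1 (le_abs_self _)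
    have h3 : (1:ℝ≥0) ≤ ‖f y‖₊ := by exact_mod_cast h2
    exact_mod_cast h3
  calc (1:ℝ≥0∞) = volume (Set.Ioo ((j:ℝ)^2) ((j:ℝ)^2 + 1)) := by
        rw [Real.volume_Ioo]; norm_num
    _ = ∫⁻ _ in Set.Ioo ((j:ℝ)^2) ((j:ℝ)^2 + 1), (1:ℝ≥0∞) := (setLIntegral_one _).symm
    _ ≤ _ := setLIntegral_mono' measurableSet_Ioo h

private lemma st10_max_lb {f : ℝ → ℝ}
    (hf : ∀ x, f x = ∑' k : ℕ,
      Set.indicator (Set.Icc ((k:ℝ)^2) ((k:ℝ)^2 + 1)) (fun _ => (1:ℝ)) x)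
    (j : ℕ) {x : ℝ} (hx : (j:ℝ)^2 < x) :
    (ENNReal.ofReal (x - (j:ℝ)^2 + 3))⁻¹ ≤ maximalFn1 f x := by
  have hab : ((j:ℝ)^2 - 1) < x + 2 := by linarith
  unfold maximalFn1
  apply le_iSup_of_le ((j:ℝ)^2 - 1)
  apply le_iSup_of_le (x + 2)
  apply le_iSup_of_le hab
  apply le_iSup_of_le (⟨by linarith, by linarith⟩ : x ∈ Set.Ioo ((j:ℝ)^2 - 1) (x + 2))
  have hsub : Set.Ioo ((j:ℝ)^2) ((j:ℝ)^2 + 1) ⊆ Set.Ioo ((j:ℝ)^2 - 1) (x + 2) :=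
    Set.Ioo_subset_Ioo (by linarith) (by linarith)
  have h1 : (1:ℝ≥0∞) ≤ ∫⁻ y in Set.Ioo ((j:ℝ)^2 - 1) (x + 2), (‖f y‖₊ : ℝ≥0∞) :=
    le_trans (st10_bump hf j) (lintegral_mono_set hsub)
  have heq : x + 2 - ((j:ℝ)^2 - 1) = x - (j:ℝ)^2 + 3 := by ring
  rw [heq]
  calc (ENNReal.ofReal (x - (j:ℝ)^2 + 3))⁻¹
      = (ENNReal.ofReal (x - (j:ℝ)^2 + 3))⁻¹ * 1 := (mul_one _).symm
    _ ≤ _ := by gcongr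

private lemma st10_block_int (j : ℕ) :
    ENNReal.ofReal (Real.log ((2*(j:ℝ)+4)/3)) ≤
    ∫⁻ x in Set.Ioo ((j:ℝ)^2) (((j:ℝ)+1)^2), (ENNReal.ofReal (x - (j:ℝ)^2 + 3))⁻¹ := by
  set c : ℝ := (j:ℝ)^2 with hc
  set d : ℝ := ((j:ℝ)+1)^2 with hd
  have hj0 : (0:ℝ) ≤ (j:ℝ) := Nat.cast_nonneg j
  have hcd : c < d := by nlinarith
  have hpos : ∀ x ∈ Set.Ioo c d, (0:ℝ) < x - c + 3 := by
    intro x hx; have := hx.1; linarith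
  have hcongr : ∫⁻ x in Set.Ioo c d, (ENNReal.ofReal (x - c + 3))⁻¹
      = ∫⁻ x in Set.Ioo c d, ENNReal.ofReal ((x - c + 3)⁻¹) := by
    apply setLIntegral_congr_fun measurableSet_Ioo
    intro x hx
    show (ENNReal.ofReal (x - c + 3))⁻¹ = ENNReal.ofReal ((x - c + 3)⁻¹)
    rw [ENNReal.ofReal_inv_of_pos (hpos x hx)]
  have hcont : ContinuousOn (fun x : ℝ => (x - c + 3)⁻¹) (Set.Icc c d) := by
    apply ContinuousOn.inv₀
    · fun_prop
    · intro x hx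
      have := hx.1
      intro h0; linarith [hx.1, sub_add_cancel x c ▸ h0]
  have hint : IntegrableOn (fun x : ℝ => (x - c + 3)⁻¹) (Set.Ioo c d) :=
    (hcont.integrableOn_Icc).mono_set Set.Ioo_subset_Icc_self
  have hnn : (0:ℝ → ℝ) ≤ᵐ[volume.restrict (Set.Ioo c d)] fun x => (x - c + 3)⁻¹ := by
    rw [Filter.EventuallyLE, ae_restrict_iff' measurableSet_Ioo]
    filter_upwards with x hx
    exact le_of_lt (inv_pos.mpr (hpos x hx))
  have hlift := ofReal_integral_eq_lintegral_ofReal hint hnn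
  rw [hcongr, ← hlift]
  apply ENNReal.ofReal_le_ofReal
  have hreal : ∫ x in Set.Ioo c d, (x - c + 3)⁻¹ = Real.log ((d - c + 3)/3) := by
    rw [← integral_Ioc_eq_integral_Ioo, ← intervalIntegral.integral_of_le hcd.le]
    have h1 : ∀ x : ℝ, x - c + 3 = x - (c - 3) := by intro x; ring
    simp_rw [h1]
    rw [intervalIntegral.integral_comp_sub_right (fun t => t⁻¹) (c - 3)]
    have h2 : c - (c - 3) = (3:ℝ) := by ring
    have h3 : d - (c - 3) = d - c + 3 := by ring
    rw [h2, h3]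
    apply integral_inv
    intro h0
    rw [Set.mem_uIcc] at h0
    rcases h0 with ⟨h, _⟩ | ⟨_, h⟩ <;> linarith [hcd]
  rw [hreal]
  have hdcd : d - c + 3 = 2*(j:ℝ)+4 := by rw [hc, hd]; ring
  rw [hdcd]

private lemma st10_sum_lb {f : ℝ → ℝ}
    (hf : ∀ x, f x = ∑' k : ℕ,
      Set.indicator (Set.Icc ((k:ℝ)^2) ((k:ℝ)^2 + 1)) (fun _ => (1:ℝ)) x)
    (k : ℕ) :
    ∑ j ∈ Finset.range k, ENNReal.ofReal (Real.log ((2*(j:ℝ)+4)/3)) ≤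
    ∫⁻ x in Set.Ioo (0:ℝ) ((k:ℝ)^2), maximalFn1 f x := by
  induction k with
  | zero => simp
  | succ k ih =>
    have hblock : ENNReal.ofReal (Real.log ((2*(k:ℝ)+4)/3)) ≤
        ∫⁻ x in Set.Ioo ((k:ℝ)^2) (((k:ℝ)+1)^2), maximalFn1 f x := by
      refine le_trans (st10_block_int k) (setLIntegral_mono' measurableSet_Ioo ?_)
      intro x hx
      exact st10_max_lb hf k hx.1
    have hdisj : Disjoint (Set.Ioo (0:ℝ) ((k:ℝ)^2)) (Set.Ioo ((k:ℝ)^2) (((k:ℝ)+1)^2)) := by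
      apply Set.disjoint_left.mpr
      intro x hx1 hx2
      exact absurd hx1.2 (not_lt.mpr hx2.1.le)
    have hsubset : Set.Ioo (0:ℝ) ((k:ℝ)^2) ∪ Set.Ioo ((k:ℝ)^2) (((k:ℝ)+1)^2)
        ⊆ Set.Ioo (0:ℝ) (((k:ℝ)+1:ℝ)^2) := by
      have hj0 : (0:ℝ) ≤ (k:ℝ) := Nat.cast_nonneg k
      rintro x (hx | hx)
      · exact ⟨hx.1, by nlinarith [hx.2]⟩
      · exact ⟨lt_of_le_of_lt (by positivity) hx.1, hx.2⟩
    have hcast : (((k:ℕ)+1:ℕ):ℝ)^2 = ((k:ℝ)+1)^2 := by push_cast; ring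
    rw [Finset.sum_range_succ, hcast]
    calc ∑ j ∈ Finset.range k, ENNReal.ofReal (Real.log ((2*(j:ℝ)+4)/3))
          + ENNReal.ofReal (Real.log ((2*(k:ℝ)+4)/3))
        ≤ (∫⁻ x in Set.Ioo (0:ℝ) ((k:ℝ)^2), maximalFn1 f x)
          + ∫⁻ x in Set.Ioo ((k:ℝ)^2) (((k:ℝ)+1)^2), maximalFn1 f x :=
          add_le_add ih hblock
      _ = ∫⁻ x in Set.Ioo (0:ℝ) ((k:ℝ)^2) ∪ Set.Ioo ((k:ℝ)^2) (((k:ℝ)+1)^2),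
            maximalFn1 f x := (lintegral_union measurableSet_Ioo hdisj).symm
      _ ≤ _ := lintegral_mono_set hsubset

private lemma st10_sup_top {f : ℝ → ℝ}
    (hf : ∀ x, f x = ∑' k : ℕ,
      Set.indicator (Set.Icc ((k:ℝ)^2) ((k:ℝ)^2 + 1)) (fun _ => (1:ℝ)) x) :
    (⨆ (k : ℕ) (_ : 1 ≤ k),
      ((k : ℝ≥0∞))⁻¹ * ∫⁻ x in Set.Ioo (0:ℝ) ((k:ℝ)^2), maximalFn1 f x) = ⊤ := by
  rw [eq_top_iff, ← ENNReal.iSup_natCast]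
  apply iSup_le
  intro n
  set m : ℕ := ⌈3 * Real.exp (2*n)⌉₊ with hm
  have hexp : (0:ℝ) < 3 * Real.exp (2*n) := by positivity
  have hm1 : 1 ≤ m := Nat.one_le_iff_ne_zero.mpr (by
    intro h0
    have := Nat.ceil_pos.mpr hexp
    omega)
  have hmR : 3 * Real.exp (2*n) ≤ (m:ℝ) := Nat.le_ceil _
  set k : ℕ := 2 * m with hk
  have hk1 : 1 ≤ k := by omega
  apply le_iSup_of_le k
  apply le_iSup_of_le hk1
  -- real sum lower bound
  have hnonneg : ∀ j : ℕ, 0 ≤ Real.log ((2*(j:ℝ)+4)/3) := by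
    intro j
    have hj : (0:ℝ) ≤ (j:ℝ) := Nat.cast_nonneg j
    exact Real.log_nonneg (by linarith)
  have hsumR : (m:ℝ) * Real.log ((2*(m:ℝ)+4)/3)
      ≤ ∑ j ∈ Finset.range k, Real.log ((2*(j:ℝ)+4)/3) := by
    calc (m:ℝ) * Real.log ((2*(m:ℝ)+4)/3)
        = ∑ _j ∈ Finset.Ico m k, Real.log ((2*(m:ℝ)+4)/3) := by
          rw [Finset.sum_const, Nat.card_Ico]
          have : k - m = m := by omega
          rw [this]; rw [nsmul_eq_mul]
      _ ≤ ∑ j ∈ Finset.Ico m k, Real.log ((2*(j:ℝ)+4)/3) := by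
          apply Finset.sum_le_sum
          intro j hj
          have hjm : m ≤ j := (Finset.mem_Ico.mp hj).1
          apply Real.log_le_log (by positivity)
          have : (m:ℝ) ≤ (j:ℝ) := Nat.cast_le.mpr hjm
          linarith
      _ ≤ ∑ j ∈ Finset.range k, Real.log ((2*(j:ℝ)+4)/3) := by
          apply Finset.sum_le_sum_of_subset_of_nonneg
          · rw [Finset.range_eq_Ico]
            exact Finset.Ico_subset_Ico (Nat.zero_le m) le_rfl
          · intro j _ _; exact hnonneg j
  have hsum := st10_sum_lb hf k
  have hofsum : ENNReal.ofReal (∑ j ∈ Finset.range k, Real.log ((2*(j:ℝ)+4)/3))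
      = ∑ j ∈ Finset.range k, ENNReal.ofReal (Real.log ((2*(j:ℝ)+4)/3)) :=
    ENNReal.ofReal_sum_of_nonneg (fun j _ => hnonneg j)
  have hkpos : (0:ℝ) < (k:ℝ) := by exact_mod_cast hk1
  have hkinv : ((k:ℝ≥0∞))⁻¹ = ENNReal.ofReal ((k:ℝ)⁻¹) := by
    rw [ENNReal.ofReal_inv_of_pos hkpos, ENNReal.ofReal_natCast]
  calc (n:ℝ≥0∞) = ENNReal.ofReal n := (ENNReal.ofReal_natCast n).symm
    _ ≤ ENNReal.ofReal ((k:ℝ)⁻¹ * ((m:ℝ) * Real.log ((2*(m:ℝ)+4)/3))) := by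
        apply ENNReal.ofReal_le_ofReal
        have hmpos : (0:ℝ) < (m:ℝ) := by exact_mod_cast hm1
        have hkm : (k:ℝ) = 2 * (m:ℝ) := by push_cast [hk]; ring
        rw [hkm]
        have hcalc : (2 * (m:ℝ))⁻¹ * ((m:ℝ) * Real.log ((2*(m:ℝ)+4)/3))
            = Real.log ((2*(m:ℝ)+4)/3) / 2 := by
          field_simp
        rw [hcalc]
        have hlog : 2*(n:ℝ) ≤ Real.log ((2*(m:ℝ)+4)/3) := by
          have h1 : Real.exp (2*n) ≤ (2*(m:ℝ)+4)/3 := by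
            have : 3 * Real.exp (2*n) ≤ 2*(m:ℝ)+4 := by linarith
            linarith
          calc 2*(n:ℝ) = Real.log (Real.exp (2*n)) := (Real.log_exp _).symm
            _ ≤ _ := Real.log_le_log (Real.exp_pos _) h1
        linarith
    _ = ((k:ℝ≥0∞))⁻¹ * ENNReal.ofReal ((m:ℝ) * Real.log ((2*(m:ℝ)+4)/3)) := by
        rw [ENNReal.ofReal_mul (by positivity), hkinv]
    _ ≤ ((k:ℝ≥0∞))⁻¹ * ENNReal.ofReal (∑ j ∈ Finset.range k, Real.log ((2*(j:ℝ)+4)/3)) := by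
        exact mul_le_mul_right (ENNReal.ofReal_le_ofReal hsumR) _
    _ ≤ ((k:ℝ≥0∞))⁻¹ * ∫⁻ x in Set.Ioo (0:ℝ) ((k:ℝ)^2), maximalFn1 f x := by
        gcongr
        rw [hofsum]; exact hsum

/-- For `f = ∑_{k=0}^∞ χ_{[k², k²+1]}`, `‖Mf‖_{M_{1,1/2}(ℝ)} = ∞`;
more precisely `sup_{k ≥ 1} k⁻¹ ∫_0^{k²} Mf = ∞`. -/
theorem statement10 (f : ℝ → ℝ)
    (hf : ∀ x, f x = ∑' k : ℕ,
      Set.indicator (Set.Icc ((k:ℝ)^2) ((k:ℝ)^2 + 1)) (fun _ => (1:ℝ)) x) :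
    morreyNorm1E (1/2) (maximalFn1 f) = ⊤ ∧
    (⨆ (k : ℕ) (_ : 1 ≤ k),
      ((k : ℝ≥0∞))⁻¹ * ∫⁻ x in Set.Ioo (0:ℝ) ((k:ℝ)^2), maximalFn1 f x) = ⊤ := by
  have hsup := st10_sup_top hf
  refine ⟨?_, hsup⟩
  rw [eq_top_iff, ← hsup]
  apply iSup_le; intro k; apply iSup_le; intro hk1
  unfold morreyNorm1E
  have hkpos : (0:ℝ) < (k:ℝ) := by exact_mod_cast hk1
  apply le_iSup_of_le (0:ℝ)
  apply le_iSup_of_le ((k:ℝ)^2)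
  apply le_iSup_of_le (by positivity : (0:ℝ) < (k:ℝ)^2)
  have hcoef : ENNReal.ofReal (((k:ℝ)^2 - 0) ^ ((1:ℝ)/2 - 1)) = ((k:ℝ≥0∞))⁻¹ := by
    rw [sub_zero]
    have h1 : ((k:ℝ)^2) ^ ((1:ℝ)/2 - 1) = (k:ℝ)⁻¹ := by
      rw [← Real.rpow_natCast (k:ℝ) 2, ← Real.rpow_mul hkpos.le]
      norm_num [Real.rpow_neg_one]
    rw [h1, ENNReal.ofReal_inv_of_pos hkpos, ENNReal.ofReal_natCast]
  rw [hcoef]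
end

section
/- The Hardy–Littlewood maximal operator $M$ is not bounded on the Morrey space $\mathcal{M}_{1,1/2}(\mathbb{R})$: there exists a locally integrable function $f : \mathbb{R} \to [0,\infty)$ (namely $f = \sum_{k=0}^{\infty} \chi_{[k^2, k^2+1]}$) such that $\|f\|_{\mathcal{M}_{1,1/2}(\mathbb{R})} < \infty$ but $\|Mf\|_{\mathcal{M}_{1,1/2}(\mathbb{R})} = \infty$. -/
open MeasureTheory Set
open intervalIntegral
open scoped ENNReal NNReal

noncomputable def SS : Set ℝ := ⋃ k : ℕ, Icc ((k:ℝ)^2) ((k:ℝ)^2+1)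

lemma measurableSet_SS : MeasurableSet SS :=
  MeasurableSet.iUnion fun _ => measurableSet_Icc

noncomputable def ff : ℝ → ℝ := SS.indicator (fun _ => 1)

lemma ff_nonneg : ∀ x, 0 ≤ ff x := fun x => Set.indicator_nonneg (fun _ _ => zero_le_one) x

lemma ff_abs (x : ℝ) : ‖ff x‖ ≤ 1 := by
  by_cases h : x ∈ SS <;> simp [ff, Set.indicator_of_mem, Set.indicator_of_notMem, h]

lemma ff_meas : Measurable ff := by
  exact (measurable_const.indicator measurableSet_SS)

lemma ff_locint : LocallyIntegrable ff volume := by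
  intro x
  refine ⟨Metric.ball x 1, Metric.ball_mem_nhds x one_pos, ?_⟩
  have : IntegrableOn (fun _ => (1:ℝ)) (Metric.ball x 1) volume := by
    apply (integrableOn_const_iff (by simp)).mpr; right
    exact measure_ball_lt_top
  exact Integrable.mono' this ff_meas.aestronglyMeasurable (Filter.Eventually.of_forall ff_abs)

lemma ff_nnnorm (y : ℝ) : (‖ff y‖₊ : ℝ≥0∞) = SS.indicator (fun _ => (1:ℝ≥0∞)) y := by
  by_cases h : y ∈ SS <;> simp [ff, Set.indicator_of_mem, Set.indicator_of_notMem, h]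

lemma lint_ff (t : Set ℝ) : ∫⁻ y in t, ‖ff y‖₊ = volume (SS ∩ t) := by
  simp_rw [ff_nnnorm]
  rw [lintegral_indicator measurableSet_SS _, setLIntegral_one, Measure.restrict_apply measurableSet_SS]

lemma sqrt_sub_sqrt_le {b c : ℝ} (hc : 0 ≤ c) : Real.sqrt b - Real.sqrt c ≤ Real.sqrt (b - c) := by
  rcases le_or_gt b c with h | h
  · have := Real.sqrt_le_sqrt h
    have := Real.sqrt_nonneg (b - c)
    linarith
  · have hbc : 0 ≤ b - c := by linarith
    have h1 : Real.sqrt b ≤ Real.sqrt (b - c) + Real.sqrt c := by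
      rw [Real.sqrt_le_iff]
      have h2 := Real.sq_sqrt hbc
      have h3 := Real.sq_sqrt hc
      have h4 := Real.sqrt_nonneg (b-c)
      have h5 := Real.sqrt_nonneg c
      constructor
      · positivity
      · nlinarith [mul_nonneg h4 h5]
    linarith

lemma vol_SS_inter (a b : ℝ) : volume (SS ∩ Ioo a b) ≤ ENNReal.ofReal (Real.sqrt (b - a + 1) + 1) := by
  set c : ℝ := max (a - 1) 0 with hc
  have hc0 : 0 ≤ c := le_max_right _ _
  set n : ℕ := ⌈Real.sqrt c⌉₊ with hn
  set m : ℕ := ⌊Real.sqrt b⌋₊ with hm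
  have hsub : SS ∩ Ioo a b ⊆ ⋃ k ∈ Finset.Icc n m, Icc ((k:ℝ)^2) ((k:ℝ)^2+1) := by
    rintro x ⟨hxS, hxab⟩
    obtain ⟨k, hk⟩ : ∃ k : ℕ, x ∈ Icc ((k:ℝ)^2) ((k:ℝ)^2+1) := mem_iUnion.mp hxS
    refine mem_biUnion (x := k) ?_ hk
    obtain ⟨hk1, hk2⟩ := hk
    obtain ⟨hxa, hxb⟩ := hxab
    have hkb : ((k:ℝ))^2 < b := lt_of_le_of_lt hk1 hxb
    have hka : a - 1 < (k:ℝ)^2 := by linarith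
    have hck : c ≤ (k:ℝ)^2 := max_le hka.le (by positivity)
    refine Finset.mem_coe.mpr (Finset.mem_Icc.mpr ⟨?_, ?_⟩)
    · rw [hn, Nat.ceil_le]
      calc Real.sqrt c ≤ Real.sqrt ((k:ℝ)^2) := Real.sqrt_le_sqrt hck
        _ = k := Real.sqrt_sq (by positivity)
    · rw [hm]
      apply Nat.le_floor
      calc (k:ℝ) = Real.sqrt ((k:ℝ)^2) := (Real.sqrt_sq (by positivity)).symm
        _ ≤ Real.sqrt b := Real.sqrt_le_sqrt hkb.le
  calc volume (SS ∩ Ioo a b) ≤ volume (⋃ k ∈ Finset.Icc n m, Icc ((k:ℝ)^2) ((k:ℝ)^2+1)) :=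
        measure_mono hsub
    _ ≤ ∑ k ∈ Finset.Icc n m, volume (Icc ((k:ℝ)^2) ((k:ℝ)^2+1)) := measure_biUnion_finset_le _ _
    _ = ∑ k ∈ Finset.Icc n m, 1 := by
        refine Finset.sum_congr rfl fun k _ => ?_
        rw [Real.volume_Icc]
        norm_num
    _ = ((m + 1 - n : ℕ) : ℝ≥0∞) := by rw [Finset.sum_const, Nat.card_Icc]; simp
    _ ≤ ENNReal.ofReal (Real.sqrt (b - a + 1) + 1) := by
        rw [← ENNReal.ofReal_natCast]
        apply ENNReal.ofReal_le_ofReal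
        rcases le_or_gt n m with h | h
        · have h1 : ((m + 1 - n : ℕ) : ℝ) = (m : ℝ) + 1 - n := by
            push_cast [Nat.cast_sub (by omega : n ≤ m + 1)]; ring
          rw [h1]
          have h2 : (m : ℝ) ≤ Real.sqrt b := Nat.floor_le (Real.sqrt_nonneg b)
          have h3 : Real.sqrt c ≤ (n : ℝ) := Nat.le_ceil _
          have h4 : Real.sqrt b - Real.sqrt c ≤ Real.sqrt (b - c) := sqrt_sub_sqrt_le hc0
          have h5 : Real.sqrt (b - c) ≤ Real.sqrt (b - a + 1) := by
            apply Real.sqrt_le_sqrt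
            have : a - 1 ≤ c := le_max_left _ _
            linarith
          linarith
        · have : m + 1 - n = 0 := by omega
          rw [this]
          have := Real.sqrt_nonneg (b - a + 1)
          push_cast; linarith

lemma morrey_ff : morreyNorm1 (1/2) ff < ⊤ := by
  have key : ∀ a b : ℝ, a < b →
      ENNReal.ofReal ((b - a) ^ ((1:ℝ)/2 - 1)) * ∫⁻ y in Set.Ioo a b, ‖ff y‖₊ ≤ 3 := by
    intro a b hab
    rw [lint_ff]
    set t : ℝ := b - a with ht
    have ht0 : 0 < t := by simp [ht]; linarith
    rcases le_or_gt t 1 with hc | hc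
    · have h1 : volume (SS ∩ Ioo a b) ≤ ENNReal.ofReal t := by
        calc volume (SS ∩ Ioo a b) ≤ volume (Ioo a b) := measure_mono inter_subset_right
          _ = ENNReal.ofReal t := by rw [Real.volume_Ioo]
      calc ENNReal.ofReal (t ^ ((1:ℝ)/2 - 1)) * volume (SS ∩ Ioo a b)
          ≤ ENNReal.ofReal (t ^ ((1:ℝ)/2 - 1)) * ENNReal.ofReal t :=
            mul_le_mul_right h1 _
        _ = ENNReal.ofReal (t ^ ((1:ℝ)/2 - 1) * t) := (ENNReal.ofReal_mul (by positivity)).symm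
        _ ≤ 3 := by
            have e0 : t ^ ((1:ℝ)/2 - 1) * t = t ^ ((1:ℝ)/2) := by
              have e1 := Real.rpow_add ht0 ((1:ℝ)/2 - 1) 1
              rw [Real.rpow_one] at e1
              rw [← e1]; norm_num
            rw [e0]
            have : t ^ ((1:ℝ)/2) ≤ 1 := Real.rpow_le_one ht0.le hc (by norm_num)
            calc ENNReal.ofReal (t ^ ((1:ℝ)/2)) ≤ ENNReal.ofReal 1 := ENNReal.ofReal_le_ofReal this
              _ ≤ 3 := by norm_num
    · have h1 : volume (SS ∩ Ioo a b) ≤ ENNReal.ofReal ((Real.sqrt 2 + 1) * Real.sqrt t) := by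
        refine (vol_SS_inter a b).trans (ENNReal.ofReal_le_ofReal ?_)
        have e1 : Real.sqrt (t + 1) ≤ Real.sqrt 2 * Real.sqrt t := by
          rw [← Real.sqrt_mul (by norm_num : (0:ℝ) ≤ 2)]
          apply Real.sqrt_le_sqrt; linarith
        have e2 : (1:ℝ) ≤ Real.sqrt t := by
          rw [show (1:ℝ) = Real.sqrt 1 by simp]
          exact Real.sqrt_le_sqrt hc.le
        rw [← ht]
        ring_nf
        ring_nf at e1
        linarith
      calc ENNReal.ofReal (t ^ ((1:ℝ)/2 - 1)) * volume (SS ∩ Ioo a b)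
          ≤ ENNReal.ofReal (t ^ ((1:ℝ)/2 - 1)) * ENNReal.ofReal ((Real.sqrt 2 + 1) * Real.sqrt t) :=
            mul_le_mul_right h1 _
        _ = ENNReal.ofReal (t ^ ((1:ℝ)/2 - 1) * ((Real.sqrt 2 + 1) * Real.sqrt t)) :=
            (ENNReal.ofReal_mul (by positivity)).symm
        _ ≤ 3 := by
            rw [Real.sqrt_eq_rpow t]
            rw [show t ^ ((1:ℝ)/2 - 1) * ((Real.sqrt 2 + 1) * t ^ ((1:ℝ)/2))
                = (Real.sqrt 2 + 1) * (t ^ ((1:ℝ)/2 - 1) * t ^ ((1:ℝ)/2)) by ring]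
            rw [← Real.rpow_add ht0, show (1:ℝ)/2 - 1 + 1/2 = 0 by norm_num, Real.rpow_zero,
              mul_one]
            have h2 : Real.sqrt 2 ≤ 2 := by
              nlinarith [Real.sq_sqrt (by norm_num : (0:ℝ) ≤ 2), Real.sqrt_nonneg 2]
            calc ENNReal.ofReal (Real.sqrt 2 + 1) ≤ ENNReal.ofReal 3 :=
                ENNReal.ofReal_le_ofReal (by linarith)
              _ = 3 := by norm_num
  apply lt_of_le_of_lt _ (by norm_num : (3:ℝ≥0∞) < ⊤)
  rw [morreyNorm1]
  exact iSup_le fun a => iSup_le fun b => iSup_le fun hab => key a b hab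


lemma SS_def : SS = ⋃ k : ℕ, Icc ((k:ℝ)^2) ((k:ℝ)^2+1) := rfl

lemma Mf_lower (k : ℕ) (x : ℝ) (hx : (k:ℝ)^2 + 1 < x) :
    (ENNReal.ofReal (x - (k:ℝ)^2 + 1))⁻¹ ≤ maximalFn1 ff x := by
  set a : ℝ := (k:ℝ)^2 - 1/2 with ha
  set b : ℝ := x + 1/2 with hb
  have hk0 : (0:ℝ) ≤ (k:ℝ)^2 := by positivity
  have hab : a < b := by rw [ha, hb]; linarith
  have hxab : x ∈ Ioo a b := by rw [ha, hb]; constructor <;> [skip; skip] <;> simp <;> linarith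
  have hsub : Icc ((k:ℝ)^2) ((k:ℝ)^2+1) ⊆ SS ∩ Ioo a b := by
    intro y hy
    obtain ⟨hy1, hy2⟩ := hy
    refine ⟨?_, ?_, ?_⟩
    · rw [SS_def]; exact mem_iUnion.mpr ⟨k, hy1, hy2⟩
    · rw [ha]; linarith
    · rw [hb]; linarith
  have hI : (1:ℝ≥0∞) ≤ ∫⁻ y in Ioo a b, ‖ff y‖₊ := by
    rw [lint_ff]
    calc (1:ℝ≥0∞) = volume (Icc ((k:ℝ)^2) ((k:ℝ)^2+1)) := by rw [Real.volume_Icc]; norm_num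
      _ ≤ volume (SS ∩ Ioo a b) := measure_mono hsub
  have hba : b - a = x - (k:ℝ)^2 + 1 := by rw [ha, hb]; ring
  have step : (ENNReal.ofReal (x - (k:ℝ)^2 + 1))⁻¹ ≤
      (ENNReal.ofReal (b - a))⁻¹ * ∫⁻ y in Ioo a b, ‖ff y‖₊ := by
    rw [hba]
    calc (ENNReal.ofReal (x - (k:ℝ)^2 + 1))⁻¹
        = (ENNReal.ofReal (x - (k:ℝ)^2 + 1))⁻¹ * 1 := (mul_one _).symm
      _ ≤ _ := mul_le_mul_right hI _
  refine step.trans ?_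
  rw [maximalFn1]
  exact le_iSup_of_le a (le_iSup_of_le b (le_iSup_of_le hab (le_iSup_of_le hxab le_rfl)))

lemma gap_integral (k : ℕ) :
    ENNReal.ofReal (Real.log ((k:ℝ)+1)) ≤
      ∫⁻ x in Ioo ((k:ℝ)^2+1) (((k:ℝ)+1)^2), (ENNReal.ofReal (x - (k:ℝ)^2 + 1))⁻¹ := by
  set A : ℝ := (k:ℝ)^2+1 with hA
  set B : ℝ := ((k:ℝ)+1)^2 with hB
  have hk0 : (0:ℝ) ≤ (k:ℝ) := Nat.cast_nonneg k
  have hAB : A ≤ B := by rw [hA, hB]; nlinarith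
  set c : ℝ := 1 - (k:ℝ)^2 with hc
  have hpos : ∀ x ∈ Ioo A B, 0 < x + c := by
    intro x hx; rw [hc]; have := hx.1; rw [hA] at this; linarith
  have heq : ∀ x ∈ Ioo A B, (ENNReal.ofReal (x - (k:ℝ)^2 + 1))⁻¹ = ENNReal.ofReal ((x + c)⁻¹) := by
    intro x hx
    rw [show x - (k:ℝ)^2 + 1 = x + c by rw [hc]; ring]
    rw [ENNReal.ofReal_inv_of_pos (hpos x hx)]
  rw [setLIntegral_congr_fun measurableSet_Ioo heq]
  -- integrability
  have hcont : ContinuousOn (fun x : ℝ => (x + c)⁻¹) (Icc A B) := by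
    apply ContinuousOn.inv₀ (by fun_prop)
    intro x hx
    have : 0 < x + c := by rw [hc]; have := hx.1; rw [hA] at this; linarith
    exact ne_of_gt this
  have hInt : IntegrableOn (fun x : ℝ => (x + c)⁻¹) (Ioo A B) volume := by
    exact (hcont.integrableOn_Icc).mono_set Ioo_subset_Icc_self
  have hnn : 0 ≤ᵐ[volume.restrict (Ioo A B)] fun x : ℝ => (x + c)⁻¹ := by
    rw [Filter.EventuallyLE, ae_restrict_iff' measurableSet_Ioo]
    exact Filter.Eventually.of_forall fun x hx => by simpa using (hpos x hx).le
  rw [← ofReal_integral_eq_lintegral_ofReal hInt hnn]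
  apply ENNReal.ofReal_le_ofReal
  have comp : ∫ x in Ioo A B, (x + c)⁻¹ = Real.log ((k:ℝ)+1) := by
    rw [← integral_Ioc_eq_integral_Ioo, ← integral_of_le hAB]
    rw [integral_comp_add_right (fun u => u⁻¹) c]
    rw [integral_inv]
    · rw [show B + c = 2*((k:ℝ)+1) by rw [hB, hc]; ring, show A + c = 2 by rw [hA, hc]; ring]
      rw [show 2*((k:ℝ)+1)/2 = (k:ℝ)+1 by ring]
    · intro h
      rw [Set.mem_uIcc] at h
      have h2 : A + c = 2 := by rw [hA, hc]; ring
      have h3 : B + c = 2*((k:ℝ)+1) := by rw [hB, hc]; ring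
      rcases h with ⟨h1, _⟩ | ⟨_, h1⟩ <;> [linarith [h1, h2.symm ▸ h1]; nlinarith]
  rw [comp]

lemma diverge (m : ℕ) :
    ENNReal.ofReal (Real.log ((m:ℝ)+1) / 2) ≤ morreyNorm1E (1/2) (maximalFn1 ff) := by
  set b : ℝ := ((2*(m:ℝ)+1))^2 with hbdef
  have hb1 : (1:ℝ) ≤ 2*(m:ℝ)+1 := by
    have : (0:ℝ) ≤ (m:ℝ) := Nat.cast_nonneg m
    linarith
  have hb0 : (0:ℝ) < b := by positivity
  have hab : (0:ℝ) < b := hb0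
  -- gaps
  set gap : ℕ → Set ℝ := fun k => Ioo ((k:ℝ)^2+1) (((k:ℝ)+1)^2) with hgap
  have hgapsub : ∀ k ∈ Finset.Icc m (2*m), gap k ⊆ Ioo (0:ℝ) b := by
    intro k hk x hx
    obtain ⟨hx1, hx2⟩ := hx
    rw [Finset.mem_Icc] at hk
    have hk2 : (k:ℝ) ≤ 2*(m:ℝ) := by exact_mod_cast Nat.cast_le.mpr hk.2
    constructor
    · have : (0:ℝ) ≤ (k:ℝ)^2 := by positivity
      linarith
    · have : ((k:ℝ)+1)^2 ≤ b := by
        rw [hbdef]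
        have h1 : (k:ℝ)+1 ≤ 2*(m:ℝ)+1 := by linarith
        have h2 : (0:ℝ) ≤ (k:ℝ)+1 := by positivity
        nlinarith
      linarith
  have hdisj : Set.PairwiseDisjoint (↑(Finset.Icc m (2*m))) gap := by
    intro i hi j hj hij
    wlog h : i < j generalizing i j
    · exact (this hj hi hij.symm (by omega)).symm
    apply Set.disjoint_left.mpr
    rintro x ⟨_, hx2⟩ ⟨hx3, _⟩
    have hij1 : (i:ℝ)+1 ≤ (j:ℝ) := by exact_mod_cast Nat.cast_le.mpr h
    have h0i : (0:ℝ) ≤ (i:ℝ) := Nat.cast_nonneg i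
    nlinarith
  -- main chain
  have key : ENNReal.ofReal (((m:ℝ)+1) * Real.log ((m:ℝ)+1)) ≤ ∫⁻ x in Ioo (0:ℝ) b, maximalFn1 ff x := by
    have step1 : ∫⁻ x in ⋃ k ∈ Finset.Icc m (2*m), gap k, maximalFn1 ff x ≤
        ∫⁻ x in Ioo (0:ℝ) b, maximalFn1 ff x :=
      lintegral_mono_set (by
        apply Set.iUnion₂_subset
        exact hgapsub)
    have step2 : ∫⁻ x in ⋃ k ∈ Finset.Icc m (2*m), gap k, maximalFn1 ff x =
        ∑ k ∈ Finset.Icc m (2*m), ∫⁻ x in gap k, maximalFn1 ff x :=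
      lintegral_biUnion_finset hdisj (fun k _ => measurableSet_Ioo) _
    have step3 : ∀ k ∈ Finset.Icc m (2*m),
        ENNReal.ofReal (Real.log ((m:ℝ)+1)) ≤ ∫⁻ x in gap k, maximalFn1 ff x := by
      intro k hk
      rw [Finset.mem_Icc] at hk
      have hkm : (m:ℝ) ≤ (k:ℝ) := by exact_mod_cast Nat.cast_le.mpr hk.1
      calc ENNReal.ofReal (Real.log ((m:ℝ)+1)) ≤ ENNReal.ofReal (Real.log ((k:ℝ)+1)) := by
            apply ENNReal.ofReal_le_ofReal
            apply Real.log_le_log (by linarith) (by linarith)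
        _ ≤ ∫⁻ x in gap k, (ENNReal.ofReal (x - (k:ℝ)^2 + 1))⁻¹ := gap_integral k
        _ ≤ ∫⁻ x in gap k, maximalFn1 ff x := by
            apply setLIntegral_mono' measurableSet_Ioo
            intro x hx
            exact Mf_lower k x hx.1
    calc ENNReal.ofReal (((m:ℝ)+1) * Real.log ((m:ℝ)+1))
        ≤ ∑ k ∈ Finset.Icc m (2*m), ENNReal.ofReal (Real.log ((m:ℝ)+1)) := by
          rw [Finset.sum_const, Nat.card_Icc]
          have hcard : 2*m + 1 - m = m + 1 := by omega
          rw [hcard]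
          rw [show ((m:ℝ)+1) * Real.log ((m:ℝ)+1) = (((m+1:ℕ):ℝ)) * Real.log ((m:ℝ)+1) by push_cast; ring]
          rw [ENNReal.ofReal_mul (by positivity)]
          rw [ENNReal.ofReal_natCast]
          rw [nsmul_eq_mul]
      _ ≤ ∑ k ∈ Finset.Icc m (2*m), ∫⁻ x in gap k, maximalFn1 ff x := Finset.sum_le_sum step3
      _ = _ := step2.symm
      _ ≤ _ := step1
  -- assemble
  have hterm : ENNReal.ofReal ((b - 0) ^ ((1:ℝ)/2 - 1)) * ∫⁻ x in Ioo (0:ℝ) b, maximalFn1 ff x ≤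
      morreyNorm1E (1/2) (maximalFn1 ff) := by
    rw [morreyNorm1E]
    exact le_iSup_of_le 0 (le_iSup_of_le b (le_iSup_of_le hab le_rfl))
  refine le_trans ?_ hterm
  have hrw : (b - 0) ^ ((1:ℝ)/2 - 1) = (2*(m:ℝ)+1)⁻¹ := by
    rw [sub_zero, hbdef]
    rw [← Real.rpow_natCast (2*(m:ℝ)+1) 2, ← Real.rpow_mul (by linarith)]
    rw [show ((2:ℕ):ℝ) * ((1:ℝ)/2 - 1) = -1 by push_cast; ring]
    rw [Real.rpow_neg_one]
  rw [hrw]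
  calc ENNReal.ofReal (Real.log ((m:ℝ)+1) / 2)
      ≤ ENNReal.ofReal ((2*(m:ℝ)+1)⁻¹ * (((m:ℝ)+1) * Real.log ((m:ℝ)+1))) := by
        apply ENNReal.ofReal_le_ofReal
        have hlog : 0 ≤ Real.log ((m:ℝ)+1) := Real.log_nonneg (by
          have : (0:ℝ) ≤ (m:ℝ) := Nat.cast_nonneg m
          linarith)
        rw [div_eq_mul_inv, inv_eq_one_div, mul_comm]
        rw [show (2*(m:ℝ)+1)⁻¹ * (((m:ℝ)+1) * Real.log ((m:ℝ)+1))
            = (((m:ℝ)+1) / (2*(m:ℝ)+1)) * Real.log ((m:ℝ)+1) by ring]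
        apply mul_le_mul_of_nonneg_right _ hlog
        rw [le_div_iff₀ (by linarith)]
        have : (0:ℝ) ≤ (m:ℝ) := Nat.cast_nonneg m
        linarith
    _ = ENNReal.ofReal ((2*(m:ℝ)+1)⁻¹) * ENNReal.ofReal (((m:ℝ)+1) * Real.log ((m:ℝ)+1)) :=
        ENNReal.ofReal_mul (by positivity)
    _ ≤ ENNReal.ofReal ((2*(m:ℝ)+1)⁻¹) * ∫⁻ x in Ioo (0:ℝ) b, maximalFn1 ff x :=
        mul_le_mul_right key _

lemma morreyE_top : morreyNorm1E (1/2) (maximalFn1 ff) = ⊤ := by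
  by_contra h
  set C := (morreyNorm1E (1/2) (maximalFn1 ff)).toReal with hC
  obtain ⟨m, hm⟩ : ∃ m : ℕ, Real.exp (2*C + 2) ≤ (m:ℝ) := exists_nat_ge _
  have h1 := diverge m
  rw [ENNReal.ofReal_le_iff_le_toReal h] at h1
  have h2 : Real.exp (2*C + 2) ≤ (m:ℝ) + 1 := by linarith
  have h3 : 2*C + 2 ≤ Real.log ((m:ℝ)+1) := by
    have := Real.log_le_log (Real.exp_pos _) h2
    rwa [Real.log_exp] at this
  rw [← hC] at h1
  linarith

/-- The Hardy–Littlewood maximal operator is not bounded on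
`M_{1,1/2}(ℝ)`: there is a nonnegative locally integrable `f` with
`‖f‖_{M_{1,1/2}} < ∞` but `‖Mf‖_{M_{1,1/2}} = ∞`. -/
theorem statement11 :
    ∃ f : ℝ → ℝ, (∀ x, 0 ≤ f x) ∧ LocallyIntegrable f volume ∧
      morreyNorm1 (1/2) f < ⊤ ∧ morreyNorm1E (1/2) (maximalFn1 f) = ⊤ := by
  exact ⟨ff, ff_nonneg, ff_locint, morrey_ff, morreyE_top⟩
end
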